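/- arXiv:1707.01706 — 12 statements merged into one kernel-verified Lean document; each statement's English description precedes it below -/
import Mathlib

section
/- Let (a_j)_{j≥1} be a positive nondecreasing sequence with a_j → ∞, let (s_j)_{j≥1} be a positive sequence with s_j → 0, and let Q > 0, σ > 0. Then the functional J(r) := ∑_{j=1}^∞ min(r_j, σ²/s_j²) attains its supremum on the squared positive ellipsoid Θ₊²(a,Q): there exists r* ∈ Θ₊²(a,Q) such that J(r) ≤ J(r*) for all r ∈ Θ₊²(a,Q). -/
open Filter

/- Indexing convention: coordinates are indexed by `j : ℕ` (index `j` representing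
coordinate `j+1` of the paper).  The squared positive ellipsoid `Θ₊²(a,Q)` is
`{r : ℕ → ℝ | (∀ j, 0 ≤ r j) ∧ Summable (fun j => (a j)^2 * r j) ∧ ∑' j, (a j)^2 * r j ≤ Q^2}`,
and `J r := ∑' j, min (r j) (σ²/s_j²)`. -/

/-- the functional `J` attains its supremum on the squared positive
ellipsoid `Θ₊²(a,Q)`: there is `r* ∈ Θ₊²(a,Q)` with `J r ≤ J r*` for all
`r ∈ Θ₊²(a,Q)`. -/
theorem J_attains_max_on_squared_ellipsoid
    (a : ℕ → ℝ) (ha_pos : ∀ j, 0 < a j) (ha_mono : Monotone a)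
    (ha_top : Tendsto a atTop atTop)
    (s : ℕ → ℝ) (hs_pos : ∀ j, 0 < s j)
    (hs_zero : Tendsto s atTop (nhds 0))
    (Q : ℝ) (hQ : 0 < Q) (σ : ℝ) (hσ : 0 < σ) :
    ∃ rstar : ℕ → ℝ,
      ((∀ j, 0 ≤ rstar j) ∧ (Summable fun j => (a j) ^ 2 * rstar j) ∧
        (∑' j, (a j) ^ 2 * rstar j) ≤ Q ^ 2) ∧
      ∀ r : ℕ → ℝ,
        ((∀ j, 0 ≤ r j) ∧ (Summable fun j => (a j) ^ 2 * r j) ∧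
          (∑' j, (a j) ^ 2 * r j) ≤ Q ^ 2) →
        (∑' j, min (r j) (σ ^ 2 / (s j) ^ 2))
          ≤ ∑' j, min (rstar j) (σ ^ 2 / (s j) ^ 2) := by
  classical
  have hs2 : ∀ j, (0:ℝ) < (s j) ^ 2 := fun j => pow_pos (hs_pos j) 2
  have hσ2 : (0:ℝ) < σ ^ 2 := pow_pos hσ 2
  set c : ℕ → ℝ := fun j => σ ^ 2 / (s j) ^ 2 with hc_def
  have hc_pos : ∀ j, 0 < c j := fun j => div_pos hσ2 (hs2 j)
  have haj : ∀ j, (0:ℝ) < (a j) ^ 2 := fun j => pow_pos (ha_pos j) 2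
  set F : ℕ → ℝ := fun n => ∑ j ∈ Finset.range n, (a j) ^ 2 * c j with hF_def
  -- the total capacity exceeds the budget at some finite stage
  have hex : ∃ n, Q ^ 2 < F (n + 1) := by
    have h1 : Tendsto (fun j => (s j) ^ 2) atTop (nhdsWithin 0 (Set.Ioi 0)) := by
      apply tendsto_nhdsWithin_of_tendsto_nhds_of_eventually_within
      · simpa using hs_zero.pow 2
      · exact Eventually.of_forall fun j => hs2 j
    have h2 : Tendsto (fun j => ((s j) ^ 2)⁻¹) atTop atTop := h1.inv_tendsto_nhdsGT_zero
    have hc_top : Tendsto c atTop atTop := by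
      have := h2.const_mul_atTop hσ2
      simpa [hc_def, div_eq_mul_inv] using this
    obtain ⟨M, hM⟩ := (hc_top.eventually_gt_atTop (Q ^ 2 / (a 0) ^ 2)).exists
    refine ⟨M, lt_of_lt_of_le (b := (a M) ^ 2 * c M) ?_ ?_⟩
    · have h3 : Q ^ 2 < (a 0) ^ 2 * c M := by
        rw [div_lt_iff₀ (haj 0)] at hM
        nlinarith
      have h4 : (a 0) ^ 2 ≤ (a M) ^ 2 :=
        pow_le_pow_left₀ (ha_pos 0).le (ha_mono (Nat.zero_le M)) 2
      nlinarith [hc_pos M]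
    · exact Finset.single_le_sum
        (fun j _ => mul_nonneg (haj j).le (hc_pos j).le)
        (Finset.self_mem_range_succ M)
  set N : ℕ := Nat.find hex with hN_def
  have hN1 : Q ^ 2 < F (N + 1) := Nat.find_spec hex
  have hFN : F N ≤ Q ^ 2 := by
    rcases Nat.eq_zero_or_pos N with h0 | hpos
    · rw [h0]
      simp only [hF_def, Finset.range_zero, Finset.sum_empty]
      positivity
    · have hmin := Nat.find_min hex (show N - 1 < N from Nat.sub_lt hpos one_pos)
      have heq : N - 1 + 1 = N := by omega
      rw [heq] at hmin
      exact not_lt.1 hmin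
  set t : ℝ := (Q ^ 2 - F N) / (a N) ^ 2 with ht_def
  have ht0 : 0 ≤ t := div_nonneg (sub_nonneg.2 hFN) (haj N).le
  have htc : (a N) ^ 2 * t = Q ^ 2 - F N := by
    rw [ht_def, mul_div_cancel₀ _ (haj N).ne']
  have hF1 : F (N + 1) = F N + (a N) ^ 2 * c N := Finset.sum_range_succ _ _
  have htle : t ≤ c N := by nlinarith [haj N]
  set rstar : ℕ → ℝ := fun j => if j < N then c j else if j = N then t else 0
    with hrstar_def
  have hrstar0 : ∀ j, 0 ≤ rstar j := by
    intro j
    simp only [hrstar_def]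
    split_ifs
    · exact (hc_pos j).le
    · exact ht0
    · exact le_refl 0
  have hrstar_le : ∀ j, rstar j ≤ c j := by
    intro j
    simp only [hrstar_def]
    split_ifs with h1 h2
    · exact le_refl _
    · rw [h2]; exact htle
    · exact (hc_pos j).le
  have hrstar_supp : ∀ j ∉ Finset.range (N + 1), rstar j = 0 := by
    intro j hj
    simp only [Finset.mem_range, not_lt] at hj
    have h1 : ¬ j < N := by omega
    have h2 : j ≠ N := by omega
    simp [hrstar_def, h1, h2]
  have hrstar_sum : Summable (fun j => (a j) ^ 2 * rstar j) :=
    summable_of_ne_finset_zero (s := Finset.range (N + 1))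
      (fun j hj => by rw [hrstar_supp j hj, mul_zero])
  have hsum_star : ∑' j, (a j) ^ 2 * rstar j = Q ^ 2 := by
    rw [tsum_eq_sum (s := Finset.range (N + 1))
      (fun j hj => by rw [hrstar_supp j hj, mul_zero])]
    rw [Finset.sum_range_succ]
    have h1 : ∑ j ∈ Finset.range N, (a j) ^ 2 * rstar j = F N := by
      apply Finset.sum_congr rfl
      intro j hj
      rw [Finset.mem_range] at hj
      simp [hrstar_def, hj]
    have h2 : rstar N = t := by simp [hrstar_def]
    rw [h1, h2, htc]; ring
  have hrstar_sum' : Summable rstar :=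
    summable_of_ne_finset_zero (s := Finset.range (N + 1)) hrstar_supp
  refine ⟨rstar, ⟨hrstar0, hrstar_sum, le_of_eq hsum_star⟩, ?_⟩
  rintro r ⟨hr0, hrs, hrle⟩
  set d : ℕ → ℝ := fun j => min (r j) (c j) with hd_def
  have hd0 : ∀ j, 0 ≤ d j := fun j => le_min (hr0 j) (hc_pos j).le
  have hdr : ∀ j, d j ≤ r j := fun j => min_le_left _ _
  have hrsum : Summable r := by
    apply Summable.of_nonneg_of_le hr0 (fun j => ?_) (hrs.mul_left ((a 0) ^ 2)⁻¹)
    have h1 : (a 0) ^ 2 * r j ≤ (a j) ^ 2 * r j :=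
      mul_le_mul_of_nonneg_right
        (pow_le_pow_left₀ (ha_pos 0).le (ha_mono (Nat.zero_le j)) 2) (hr0 j)
    rw [inv_mul_eq_div, le_div_iff₀ (haj 0)]
    nlinarith
  have hdsum : Summable d := Summable.of_nonneg_of_le hd0 hdr hrsum
  have hadsum : Summable (fun j => (a j) ^ 2 * d j) :=
    Summable.of_nonneg_of_le (fun j => mul_nonneg (haj j).le (hd0 j))
      (fun j => mul_le_mul_of_nonneg_left (hdr j) (haj j).le) hrs
  have had_le : ∑' j, (a j) ^ 2 * d j ≤ Q ^ 2 := by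
    refine le_trans (Summable.tsum_le_tsum (fun j => ?_) hadsum hrs) hrle
    exact mul_le_mul_of_nonneg_left (hdr j) (haj j).le
  -- key termwise inequality
  have key : ∀ j, (a N) ^ 2 * d j + (a j) ^ 2 * rstar j
      ≤ (a j) ^ 2 * d j + (a N) ^ 2 * rstar j := by
    intro j
    rcases lt_trichotomy j N with h | h | h
    · have h1 : d j ≤ c j := min_le_right _ _
      have h2 : (a j) ^ 2 ≤ (a N) ^ 2 :=
        pow_le_pow_left₀ (ha_pos j).le (ha_mono h.le) 2
      have h3 : rstar j = c j := by simp [hrstar_def, h]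
      rw [h3]
      nlinarith
    · subst h; exact le_refl _
    · have h3 : rstar j = 0 := by
        have h1 : ¬ j < N := by omega
        have h2 : j ≠ N := by omega
        simp [hrstar_def, h1, h2]
      rw [h3, mul_zero, mul_zero, add_zero, add_zero]
      exact mul_le_mul_of_nonneg_right
        (pow_le_pow_left₀ (ha_pos N).le (ha_mono h.le) 2) (hd0 j)
  have hNd : Summable (fun j => (a N) ^ 2 * d j) := hdsum.mul_left _
  have hNstar : Summable (fun j => (a N) ^ 2 * rstar j) := hrstar_sum'.mul_left _
  have main := Summable.tsum_le_tsum key (hNd.add hrstar_sum) (hadsum.add hNstar)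
  rw [Summable.tsum_add hNd hrstar_sum, Summable.tsum_add hadsum hNstar, tsum_mul_left,
    tsum_mul_left, hsum_star] at main
  have hfinal : (∑' j, d j) ≤ ∑' j, rstar j := by
    have h1 : (a N) ^ 2 * (∑' j, d j) ≤ (a N) ^ 2 * ∑' j, rstar j := by linarith
    exact le_of_mul_le_mul_left h1 (haj N)
  calc (∑' j, min (r j) (σ ^ 2 / (s j) ^ 2)) = ∑' j, d j := rfl
    _ ≤ ∑' j, rstar j := hfinal
    _ = ∑' j, min (rstar j) (σ ^ 2 / (s j) ^ 2) := by
        exact tsum_congr fun j => (min_eq_left (hrstar_le j)).symm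
end

section
/- Let (a_j)_{j≥1} be a positive nondecreasing sequence with a_j → ∞, (s_j)_{j≥1} a positive sequence with s_j → 0, Q > 0, σ > 0, and set σ_j := 1/s_j. Let r* be a maximizer of J over Θ₊²(a,Q), and define P := {i : r*_i ≥ σ²σ_i²} and Q' := {i : r*_i = σ²σ_i²}. Then the set P is finite, and for every r ∈ Θ₊²(a,Q): ∑_{i ∉ P} r_i ≤ ∑_{i ∉ P} r*_i + σ² ∑_{i ∈ Q'} σ_i². -/
open Filter
open scoped Classical

/- Indexing convention: coordinates are indexed by `i : ℕ` (index `i` representing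
coordinate `i+1` of the paper).  With `σ_i := 1/s_i`, so that `σ²σ_i² = σ²/s_i²`,
the squared positive ellipsoid `Θ₊²(a,Q)` consists of the nonnegative sequences `r`
with `∑ a_i² r_i ≤ Q²`, `J r := ∑' i, min (r i) (σ²/s_i²)`,
`P := {i | σ²/s_i² ≤ r*_i}` and `Q' := {i | r*_i = σ²/s_i²}`. -/

/-- if `r*` maximizes `J` over `Θ₊²(a,Q)`, then `P = {i : r*_i ≥ σ²σ_i²}`
is finite, and for every `r ∈ Θ₊²(a,Q)`:
`∑_{i ∉ P} r_i ≤ ∑_{i ∉ P} r*_i + σ² ∑_{i ∈ Q'} σ_i²`. -/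
theorem maximizer_tail_inequality
    (a : ℕ → ℝ) (ha_pos : ∀ j, 0 < a j) (ha_mono : Monotone a)
    (ha_top : Tendsto a atTop atTop)
    (s : ℕ → ℝ) (hs_pos : ∀ j, 0 < s j)
    (hs_zero : Tendsto s atTop (nhds 0))
    (Q : ℝ) (hQ : 0 < Q) (σ : ℝ) (hσ : 0 < σ)
    (rstar : ℕ → ℝ)
    (hrstar_mem : (∀ j, 0 ≤ rstar j) ∧ (Summable fun j => (a j) ^ 2 * rstar j) ∧
      (∑' j, (a j) ^ 2 * rstar j) ≤ Q ^ 2)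
    (hrstar_max : ∀ r : ℕ → ℝ,
      ((∀ j, 0 ≤ r j) ∧ (Summable fun j => (a j) ^ 2 * r j) ∧
        (∑' j, (a j) ^ 2 * r j) ≤ Q ^ 2) →
      (∑' j, min (r j) (σ ^ 2 / (s j) ^ 2))
        ≤ ∑' j, min (rstar j) (σ ^ 2 / (s j) ^ 2)) :
    {i : ℕ | σ ^ 2 / (s i) ^ 2 ≤ rstar i}.Finite ∧
    ∀ r : ℕ → ℝ,
      ((∀ j, 0 ≤ r j) ∧ (Summable fun j => (a j) ^ 2 * r j) ∧
        (∑' j, (a j) ^ 2 * r j) ≤ Q ^ 2) →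
      (∑' i, (if σ ^ 2 / (s i) ^ 2 ≤ rstar i then (0 : ℝ) else r i))
        ≤ (∑' i, (if σ ^ 2 / (s i) ^ 2 ≤ rstar i then (0 : ℝ) else rstar i))
          + σ ^ 2 * ∑' i, (if rstar i = σ ^ 2 / (s i) ^ 2 then 1 / (s i) ^ 2 else 0) := by
  set c : ℕ → ℝ := fun i => σ ^ 2 / (s i) ^ 2 with hcdef
  have hc_pos : ∀ i, 0 < c i := fun i => div_pos (pow_pos hσ 2) (pow_pos (hs_pos i) 2)
  -- any member of the ellipsoid is summable
  have hsumm : ∀ r : ℕ → ℝ, (∀ j, 0 ≤ r j) → (Summable fun j => a j ^ 2 * r j) →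
      Summable r := by
    intro r h0 hs
    refine Summable.of_nonneg_of_le h0 (fun j => ?_) (hs.mul_left ((a 0 ^ 2)⁻¹))
    have ha0 : (0:ℝ) < a 0 ^ 2 := pow_pos (ha_pos 0) 2
    have h1 : a 0 ^ 2 * r j ≤ a j ^ 2 * r j :=
      mul_le_mul_of_nonneg_right
        (pow_le_pow_left₀ (ha_pos 0).le (ha_mono (Nat.zero_le j)) 2) (h0 j)
    calc r j = (a 0 ^ 2)⁻¹ * (a 0 ^ 2 * r j) := by have := (ha_pos 0).ne'; field_simp
      _ ≤ (a 0 ^ 2)⁻¹ * (a j ^ 2 * r j) :=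
          mul_le_mul_of_nonneg_left h1 (inv_nonneg.mpr ha0.le)
  have hrstar_summ : Summable rstar := hsumm rstar hrstar_mem.1 hrstar_mem.2.1
  -- finiteness of P
  have hPfin : {i : ℕ | c i ≤ rstar i}.Finite := by
    have h1 : Tendsto (fun i => a i ^ 2 * rstar i) atTop (nhds 0) :=
      hrstar_mem.2.1.tendsto_atTop_zero
    have hsinv : Tendsto (fun i => (s i)⁻¹) atTop atTop := by
      apply Filter.Tendsto.inv_tendsto_nhdsGT_zero
      exact tendsto_nhdsWithin_of_tendsto_nhds_of_eventually_within _ hs_zero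
        (Eventually.of_forall fun i => hs_pos i)
    have h2 : Tendsto (fun i => a i ^ 2 * c i) atTop atTop := by
      have h3 : Tendsto (fun i => σ ^ 2 * (a i * (s i)⁻¹) ^ 2) atTop atTop := by
        apply Tendsto.const_mul_atTop (pow_pos hσ 2)
        exact (tendsto_pow_atTop two_ne_zero).comp (ha_top.atTop_mul_atTop₀ hsinv)
      refine h3.congr fun i => ?_
      have := (hs_pos i).ne'
      simp only [hcdef]
      field_simp [hcdef]
    have h4 : ∀ᶠ i in atTop, rstar i < c i := by
      filter_upwards [h1.eventually_lt_const zero_lt_one, h2.eventually_ge_atTop 1]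
        with i hi1 hi2
      have h5 : a i ^ 2 * rstar i < a i ^ 2 * c i := hi1.trans_le hi2
      exact lt_of_mul_lt_mul_left h5 (sq_nonneg _)
    obtain ⟨N, hN⟩ := eventually_atTop.mp h4
    refine Set.Finite.subset (Set.finite_Iio N) fun i hi => ?_
    by_contra h
    exact absurd hi.out (not_le.mpr (hN i (not_lt.mp h)))
  refine ⟨hPfin, ?_⟩
  intro r hr
  obtain ⟨hr0, hr_sum, hr_Q⟩ := hr
  have hr_summ : Summable r := hsumm r hr0 hr_sum
  -- the paths
  set t : ℕ → ℝ := fun n => 1 / (n + 1) with htdef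
  have ht_pos : ∀ n, 0 < t n := fun n => by positivity
  have ht_le : ∀ n, t n ≤ 1 := by
    intro n
    rw [htdef]
    rw [div_le_one (by positivity)]
    linarith [Nat.cast_nonneg (α := ℝ) n]
  have ht0 : Tendsto t atTop (nhds 0) := tendsto_one_div_add_atTop_nhds_zero_nat
  set rt : ℕ → ℕ → ℝ := fun n i => rstar i + t n * (r i - rstar i) with hrtdef
  have hrt_eq : ∀ n i, rt n i = (1 - t n) * rstar i + t n * r i := fun n i => by ring
  have hrt_mem : ∀ n, (∀ j, 0 ≤ rt n j) ∧ (Summable fun j => a j ^ 2 * rt n j) ∧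
      (∑' j, a j ^ 2 * rt n j) ≤ Q ^ 2 := by
    intro n
    have h1mt : 0 ≤ 1 - t n := by linarith [ht_le n]
    refine ⟨fun j => ?_, ?_, ?_⟩
    · rw [hrt_eq]
      have := hrstar_mem.1 j; have := hr0 j; have := (ht_pos n).le
      positivity
    · refine (((hrstar_mem.2.1.mul_left (1 - t n)).add (hr_sum.mul_left (t n))).congr
        fun i => ?_)
      rw [hrt_eq]; ring
    · have heq : (fun j => a j ^ 2 * rt n j)
          = fun j => (1 - t n) * (a j ^ 2 * rstar j) + t n * (a j ^ 2 * r j) := by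
        funext j; rw [hrt_eq]; ring
      rw [heq, Summable.tsum_add (hrstar_mem.2.1.mul_left _) (hr_sum.mul_left _),
        tsum_mul_left, tsum_mul_left]
      calc (1 - t n) * ∑' j, a j ^ 2 * rstar j + t n * ∑' j, a j ^ 2 * r j
          ≤ (1 - t n) * Q ^ 2 + t n * Q ^ 2 :=
            add_le_add (mul_le_mul_of_nonneg_left hrstar_mem.2.2 h1mt)
              (mul_le_mul_of_nonneg_left hr_Q (ht_pos n).le)
        _ = Q ^ 2 := by ring
  have hmin_summ : ∀ r' : ℕ → ℝ, (∀ j, 0 ≤ r' j) → Summable r' →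
      Summable (fun i => min (r' i) (c i)) := by
    intro r' h0 hsum
    exact Summable.of_nonneg_of_le (fun i => le_min (h0 i) (hc_pos i).le)
      (fun i => min_le_left _ _) hsum
  have hminstar_summ : Summable (fun i => min (rstar i) (c i)) :=
    hmin_summ rstar hrstar_mem.1 hrstar_summ
  have hminrt_summ : ∀ n, Summable (fun i => min (rt n i) (c i)) := fun n =>
    hmin_summ (rt n) (hrt_mem n).1 (hsumm _ (hrt_mem n).1 (hrt_mem n).2.1)
  set g : ℕ → ℕ → ℝ :=
    fun n i => ((n : ℝ) + 1) * (min (rt n i) (c i) - min (rstar i) (c i)) with hgdef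
  have hg_summ : ∀ n, Summable (g n) := fun n =>
    (((hminrt_summ n).sub hminstar_summ).mul_left _)
  have hg_le : ∀ n, (∑' i, g n i) ≤ 0 := by
    intro n
    rw [hgdef]
    simp only []
    rw [tsum_mul_left, Summable.tsum_sub (hminrt_summ n) hminstar_summ]
    have hJ := hrstar_max (rt n) (hrt_mem n)
    have hnn : (0:ℝ) ≤ (n : ℝ) + 1 := by positivity
    exact mul_nonpos_of_nonneg_of_nonpos hnn (by simpa [hcdef] using sub_nonpos.mpr hJ)
  have hnt : ∀ n : ℕ, ((n : ℝ) + 1) * t n = 1 := by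
    intro n; rw [htdef]; field_simp
  -- the limit function
  set L : ℕ → ℝ := fun i =>
    if c i ≤ rstar i then (if rstar i = c i then min (r i - rstar i) 0 else 0)
    else r i - rstar i with hLdef
  have hg_bound : ∀ n i, ‖g n i‖ ≤ |r i - rstar i| := by
    intro n i
    have h1 : |min (rt n i) (c i) - min (rstar i) (c i)|
        ≤ |t n * (r i - rstar i)| := by
      have h2 := abs_min_sub_min_le_max (rt n i) (c i) (rstar i) (c i)
      rw [sub_self, abs_zero, max_eq_left (abs_nonneg _)] at h2
      simpa [hrtdef, add_sub_cancel_left] using h2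
    have h3 : ‖g n i‖ = ((n:ℝ) + 1) * |min (rt n i) (c i) - min (rstar i) (c i)| := by
      rw [hgdef]
      rw [Real.norm_eq_abs, abs_mul, abs_of_nonneg (by positivity : (0:ℝ) ≤ (n:ℝ)+1)]
    rw [h3]
    calc ((n:ℝ) + 1) * |min (rt n i) (c i) - min (rstar i) (c i)|
        ≤ ((n:ℝ) + 1) * |t n * (r i - rstar i)| :=
          mul_le_mul_of_nonneg_left h1 (by positivity)
      _ = (((n:ℝ) + 1) * t n) * |r i - rstar i| := by
          rw [abs_mul, abs_of_nonneg (ht_pos n).le]; ring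
      _ = |r i - rstar i| := by rw [hnt n, one_mul]
  have hg_tendsto : ∀ i, Tendsto (fun n => g n i) atTop (nhds (L i)) := by
    intro i
    have hrt_tendsto : Tendsto (fun n => rt n i) atTop (nhds (rstar i)) := by
      have h : Tendsto (fun n => rstar i + t n * (r i - rstar i)) atTop (nhds (rstar i)) := by
        have h2 := (ht0.mul_const (r i - rstar i)).const_add (rstar i)
        simpa only [zero_mul, add_zero, mul_zero] using h2
      exact h.congr fun n => by rw [hrtdef]
    rcases lt_trichotomy (rstar i) (c i) with hlt | heq | hgt
    · have hL : L i = r i - rstar i := by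
        rw [hLdef]; simp only [not_le.mpr hlt, if_false]
      rw [hL]
      have hev : ∀ᶠ n in atTop, g n i = r i - rstar i := by
        filter_upwards [hrt_tendsto.eventually_lt_const hlt] with n hn
        rw [hgdef]
        simp only [min_eq_left hn.le, min_eq_left hlt.le, hrtdef]
        have : rstar i + t n * (r i - rstar i) - rstar i = t n * (r i - rstar i) := by ring
        rw [min_eq_left (show rstar i + t n * (r i - rstar i) ≤ c i from hn.le)]
        rw [this, ← mul_assoc, hnt n, one_mul]
      exact Tendsto.congr' (hev.mono fun n hn => hn.symm) tendsto_const_nhds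
    · have hL : L i = min (r i - rstar i) 0 := by
        rw [hLdef]; simp [heq]
      rw [hL]
      have hev : ∀ n, g n i = min (r i - rstar i) 0 := by
        intro n
        rw [hgdef]
        simp only [hrtdef, heq]
        rcases le_or_gt (r i - c i) 0 with hd | hd
        · have h1 : c i + t n * (r i - c i) ≤ c i := by nlinarith [ht_pos n]
          rw [min_eq_left h1, min_eq_left le_rfl, min_eq_left (by linarith : r i - c i ≤ 0)]
          have : c i + t n * (r i - c i) - c i = t n * (r i - c i) := by ring
          rw [this, ← mul_assoc, hnt n, one_mul]
        · have h1 : c i ≤ c i + t n * (r i - c i) := by nlinarith [ht_pos n]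
          rw [min_eq_right h1, min_eq_left le_rfl,
            min_eq_right (by linarith : (0:ℝ) ≤ r i - c i)]
          simp
      exact Tendsto.congr (fun n => (hev n).symm) tendsto_const_nhds
    · have hL : L i = 0 := by
        rw [hLdef]; simp only [hgt.le, if_true, if_neg hgt.ne']
      rw [hL]
      have hev : ∀ᶠ n in atTop, g n i = 0 := by
        filter_upwards [hrt_tendsto.eventually_const_lt hgt] with n hn
        rw [hgdef]
        simp [min_eq_right hn.le, min_eq_right hgt.le]
      exact Tendsto.congr' (hev.mono fun n hn => hn.symm) tendsto_const_nhds
  have hbound_summ : Summable (fun i => |r i - rstar i|) := (hr_summ.sub hrstar_summ).abs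
  have htend : Tendsto (fun n => ∑' i, g n i) atTop (nhds (∑' i, L i)) :=
    tendsto_tsum_of_dominated_convergence hbound_summ hg_tendsto
      (Eventually.of_forall fun n i => hg_bound n i)
  have hL_le : (∑' i, L i) ≤ 0 := le_of_tendsto htend (Eventually.of_forall hg_le)
  -- decompose L
  set A : ℕ → ℝ := fun i => if c i ≤ rstar i then 0 else r i with hAdef
  set B : ℕ → ℝ := fun i => if c i ≤ rstar i then 0 else rstar i with hBdef
  set C : ℕ → ℝ := fun i => if rstar i = c i then min (r i - rstar i) 0 else 0 with hCdef
  set D : ℕ → ℝ := fun i => if rstar i = c i then c i else 0 with hDdef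
  have hA_summ : Summable A := by
    refine Summable.of_nonneg_of_le (fun i => ?_) (fun i => ?_) hr_summ
    · by_cases h : c i ≤ rstar i <;> simp [hAdef, h, hr0 i]
    · by_cases h : c i ≤ rstar i <;> simp [hAdef, h, hr0 i]
  have hB_summ : Summable B := by
    refine Summable.of_nonneg_of_le (fun i => ?_) (fun i => ?_) hrstar_summ
    · by_cases h : c i ≤ rstar i <;> simp [hBdef, h, hrstar_mem.1 i]
    · by_cases h : c i ≤ rstar i <;> simp [hBdef, h, hrstar_mem.1 i]
  have hQsubP : {i : ℕ | rstar i = c i} ⊆ {i : ℕ | c i ≤ rstar i} := fun i hi => hi.out.ge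
  have hC_supp : (Function.support C).Finite := by
    refine hPfin.subset ?_
    intro i hi
    rw [Function.mem_support, hCdef] at hi
    by_contra h
    rw [Set.mem_setOf_eq] at h
    have : rstar i ≠ c i := fun heq => h heq.ge
    simp [this] at hi
  have hC_summ : Summable C := summable_of_finite_support hC_supp
  have hD_supp : (Function.support D).Finite := by
    refine hPfin.subset ?_
    intro i hi
    rw [Function.mem_support, hDdef] at hi
    by_contra h
    rw [Set.mem_setOf_eq] at h
    have : rstar i ≠ c i := fun heq => h heq.ge
    simp [this] at hi
  have hD_summ : Summable D := summable_of_finite_support hD_supp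
  have hLsplit : ∀ i, L i = (A i - B i) + C i := by
    intro i
    rw [hLdef, hAdef, hBdef, hCdef]
    rcases le_or_gt (c i) (rstar i) with h1 | h1
    · rcases eq_or_ne (rstar i) (c i) with h2 | h2
      · simp [h1, h2]
      · simp [h1, h2]
    · have h2 : rstar i ≠ c i := h1.ne
      simp [not_le.mpr h1, h2]
  have hLsum : (∑' i, L i) = (∑' i, A i) - (∑' i, B i) + (∑' i, C i) := by
    rw [tsum_congr hLsplit, Summable.tsum_add (hA_summ.sub hB_summ) hC_summ,
      Summable.tsum_sub hA_summ hB_summ]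
  have hCD : ∀ i, -C i ≤ D i := by
    intro i
    rcases eq_or_ne (rstar i) (c i) with h2 | h2
    · have hC' : C i = min (r i - rstar i) 0 := by simp [hCdef, h2]
      have hD' : D i = c i := by simp [hDdef, h2]
      rw [hC', hD', h2]
      have : -(c i) ≤ min (r i - c i) 0 :=
        le_min (by linarith [hr0 i]) (by linarith [hc_pos i])
      linarith
    · simp [hCdef, hDdef, h2]
  have hCD_sum : -(∑' i, C i) ≤ ∑' i, D i := by
    rw [← tsum_neg]
    exact Summable.tsum_le_tsum hCD hC_summ.neg hD_summ
  have hDT : (∑' i, D i) = σ ^ 2 * ∑' i, (if rstar i = c i then 1 / (s i) ^ 2 else 0) := by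
    rw [← tsum_mul_left]
    refine tsum_congr fun i => ?_
    by_cases h : rstar i = c i
    · simp [hDdef, h, hcdef, mul_one_div, div_eq_mul_inv]
    · simp [hDdef, h]
  have hmain : (∑' i, A i) ≤ (∑' i, B i) + σ ^ 2 * ∑' i,
      (if rstar i = c i then 1 / (s i) ^ 2 else 0) := by
    rw [← hDT]
    linarith [hL_le, hLsum.symm.le, hCD_sum]
  exact hmain
end

section
/- Let (a_j)_{j≥1} be a positive nondecreasing sequence with a_j → ∞, (s_j)_{j≥1} a positive sequence with s_j → 0, Q > 0, σ > 0, σ_j := 1/s_j. Let r* ∈ Θ₊²(a,Q), define P := {i : r*_i ≥ σ²σ_i²} and Q' := {i : r*_i = σ²σ_i²}, and assume P is finite. Then for every r ∈ Θ₊²(a,Q), writing h := r − r*, the one-sided directional derivative of J at r* in direction h exists and equals lim_{t↓0} (J(r* + t h) − J(r*))/t = ∑_{i ∉ P} h_i − ∑_{i ∈ Q'} max(−h_i, 0). -/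
open Filter Topology
open scoped Classical

/- Indexing convention: coordinates are indexed by `i : ℕ` (index `i` representing
coordinate `i+1` of the paper).  With `σ_i := 1/s_i`, so `σ²σ_i² = σ²/s_i²`;
the squared positive ellipsoid `Θ₊²(a,Q)` consists of the nonnegative sequences `r`
with `∑ a_i² r_i ≤ Q²`, `J r := ∑' i, min (r i) (σ²/s_i²)`,
`P := {i | σ²/s_i² ≤ r*_i}` and `Q' := {i | r*_i = σ²/s_i²}`;
`h := r − r*` and `(h_i)_- = max (−h_i) 0`. -/

/-- for `r* ∈ Θ₊²(a,Q)` with `P` finite, and any `r ∈ Θ₊²(a,Q)`,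
writing `h = r − r*`, the one-sided directional derivative of `J` at `r*` in
direction `h` exists and equals `∑_{i ∉ P} h_i − ∑_{i ∈ Q'} (h_i)_-`. -/
theorem J_gateaux_derivative
    (a : ℕ → ℝ) (ha_pos : ∀ j, 0 < a j) (ha_mono : Monotone a)
    (ha_top : Tendsto a atTop atTop)
    (s : ℕ → ℝ) (hs_pos : ∀ j, 0 < s j)
    (hs_zero : Tendsto s atTop (nhds 0))
    (Q : ℝ) (hQ : 0 < Q) (σ : ℝ) (hσ : 0 < σ)
    (rstar : ℕ → ℝ)
    (hrstar_mem : (∀ j, 0 ≤ rstar j) ∧ (Summable fun j => (a j) ^ 2 * rstar j) ∧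
      (∑' j, (a j) ^ 2 * rstar j) ≤ Q ^ 2)
    (hP_fin : {i : ℕ | σ ^ 2 / (s i) ^ 2 ≤ rstar i}.Finite)
    (r : ℕ → ℝ)
    (hr_mem : (∀ j, 0 ≤ r j) ∧ (Summable fun j => (a j) ^ 2 * r j) ∧
      (∑' j, (a j) ^ 2 * r j) ≤ Q ^ 2) :
    Tendsto
      (fun t : ℝ =>
        ((∑' i, min (rstar i + t * (r i - rstar i)) (σ ^ 2 / (s i) ^ 2))
          - ∑' i, min (rstar i) (σ ^ 2 / (s i) ^ 2)) / t)
      (𝓝[>] 0)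
      (𝓝 ((∑' i, (if σ ^ 2 / (s i) ^ 2 ≤ rstar i then (0 : ℝ) else r i - rstar i))
        - ∑' i, (if rstar i = σ ^ 2 / (s i) ^ 2
            then max (-(r i - rstar i)) 0 else 0))) := by
  obtain ⟨hrs_nn, hrs_asum, -⟩ := hrstar_mem
  obtain ⟨hr_nn, hr_asum, -⟩ := hr_mem
  set c : ℕ → ℝ := fun i => σ ^ 2 / (s i) ^ 2 with hc_def
  have hc_pos : ∀ i, 0 < c i := fun i => by
    have := hs_pos i; positivity
  -- summability of r and rstar
  have key_sum : ∀ (f : ℕ → ℝ), (∀ j, 0 ≤ f j) →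
      (Summable fun j => (a j) ^ 2 * f j) → Summable f := by
    intro f hf hsum
    have h2 : Summable (fun j => (a 0 ^ 2)⁻¹ * ((a j) ^ 2 * f j)) := hsum.mul_left _
    refine h2.of_nonneg_of_le hf ?_
    intro j
    have ha0 : a 0 ≤ a j := ha_mono (Nat.zero_le j)
    have ha0p : 0 < a 0 := ha_pos 0
    rw [inv_mul_eq_div, le_div_iff₀ (by positivity)]
    have hsq : a 0 ^ 2 ≤ a j ^ 2 := by nlinarith
    calc f j * a 0 ^ 2 ≤ f j * a j ^ 2 := by nlinarith [hf j]
      _ = a j ^ 2 * f j := mul_comm _ _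
  have hrs_sum : Summable rstar := key_sum rstar hrs_nn hrs_asum
  have hr_sum : Summable r := key_sum r hr_nn hr_asum
  set h : ℕ → ℝ := fun i => r i - rstar i with hh_def
  have hh_sum : Summable h := hr_sum.sub hrs_sum
  -- bound on |h|
  have hh0 : Tendsto (fun i => |h i|) atTop (𝓝 0) := by
    have := hh_sum.tendsto_atTop_zero.abs
    simpa using this
  obtain ⟨M₀, hM₀⟩ := hh0.bddAbove_range
  set M : ℝ := max M₀ 1 with hM_def
  have hM_pos : (0 : ℝ) < M := lt_of_lt_of_le one_pos (le_max_right _ _)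
  have hM : ∀ i, |h i| ≤ M := fun i =>
    le_trans (hM₀ (Set.mem_range_self i)) (le_max_left _ _)
  -- c i → ∞ and rstar i → 0, so eventually c i - rstar i ≥ 1
  have hc_top : Tendsto c atTop atTop := by
    have hs2 : Tendsto (fun i => (s i) ^ 2) atTop (𝓝[>] 0) := by
      refine tendsto_nhdsWithin_of_tendsto_nhds_of_eventually_within _ ?_ ?_
      · have := hs_zero.pow 2
        simpa using this
      · exact Eventually.of_forall fun i => Set.mem_Ioi.mpr (by
          have := hs_pos i; positivity)
    have hinv : Tendsto (fun i => ((s i) ^ 2)⁻¹) atTop atTop :=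
      tendsto_inv_nhdsGT_zero.comp hs2
    have := hinv.const_mul_atTop (show (0:ℝ) < σ ^ 2 by positivity)
    simpa [hc_def, div_eq_mul_inv] using this
  have hrs0 : Tendsto rstar atTop (𝓝 0) := hrs_sum.tendsto_atTop_zero
  have hN : ∃ N : ℕ, ∀ i, N ≤ i → 1 ≤ c i - rstar i := by
    have h1 : ∀ᶠ i in atTop, 2 ≤ c i := hc_top.eventually_ge_atTop 2
    have h2 : ∀ᶠ i in atTop, rstar i < 1 := hrs0.eventually (gt_mem_nhds one_pos)
    obtain ⟨N, hN⟩ := eventually_atTop.mp (h1.and h2)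
    exact ⟨N, fun i hi => by have := hN i hi; linarith [this.1, this.2]⟩
  obtain ⟨N, hN⟩ := hN
  -- ε : uniform lower bound on c i - rstar i off P
  set F : Finset ℕ := (Finset.range N).filter (fun i => ¬ c i ≤ rstar i) with hF_def
  set E : Finset ℝ := insert (1:ℝ) (F.image fun i => c i - rstar i) with hE_def
  have hE_ne : E.Nonempty := ⟨1, Finset.mem_insert_self _ _⟩
  set ε : ℝ := E.min' hE_ne with hε_def
  have hε_pos : 0 < ε := by
    have hall : ∀ x ∈ E, (0:ℝ) < x := by
      intro x hx
      simp only [hE_def, Finset.mem_insert, Finset.mem_image] at hx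
      rcases hx with rfl | ⟨i, hi, rfl⟩
      · norm_num
      · have : ¬ c i ≤ rstar i := (Finset.mem_filter.mp hi).2
        linarith [not_le.mp this]
    exact hall _ (E.min'_mem hE_ne)
  have hε1 : ε ≤ 1 := Finset.min'_le _ _ (Finset.mem_insert_self _ _)
  have hε : ∀ i, ¬ c i ≤ rstar i → ε ≤ c i - rstar i := by
    intro i hi
    rcases lt_or_ge i N with hiN | hiN
    · refine Finset.min'_le _ _ ?_
      exact Finset.mem_insert_of_mem (Finset.mem_image.mpr
        ⟨i, Finset.mem_filter.mpr ⟨Finset.mem_range.mpr hiN, hi⟩, rfl⟩)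
    · linarith [hN i hiN]
  -- δ : uniform lower bound on rstar i - c i on P \ Q'
  set G : Finset ℕ := hP_fin.toFinset.filter (fun i => ¬ rstar i = c i) with hG_def
  set D : Finset ℝ := insert (1:ℝ) (G.image fun i => rstar i - c i) with hD_def
  have hD_ne : D.Nonempty := ⟨1, Finset.mem_insert_self _ _⟩
  set δ : ℝ := D.min' hD_ne with hδ_def
  have hδ_pos : 0 < δ := by
    have hall : ∀ x ∈ D, (0:ℝ) < x := by
      intro x hx
      simp only [hD_def, Finset.mem_insert, Finset.mem_image] at hx
      rcases hx with rfl | ⟨i, hi, rfl⟩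
      · norm_num
      · obtain ⟨hi1, hi3⟩ := Finset.mem_filter.mp hi
        have hle : c i ≤ rstar i := by simpa using hP_fin.mem_toFinset.mp hi1
        rcases lt_or_eq_of_le hle with hlt | heq
        · linarith
        · exact absurd heq.symm hi3
    exact hall _ (D.min'_mem hD_ne)
  have hδ : ∀ i, c i ≤ rstar i → ¬ rstar i = c i → δ ≤ rstar i - c i := by
    intro i hi1 hi2
    refine Finset.min'_le _ _ ?_
    refine Finset.mem_insert_of_mem (Finset.mem_image.mpr ⟨i, ?_, rfl⟩)
    exact Finset.mem_filter.mpr ⟨hP_fin.mem_toFinset.mpr (by simpa using hi1), hi2⟩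
  -- threshold
  set t₁ : ℝ := min 1 (min ε δ / M) with ht₁_def
  have ht₁_pos : 0 < t₁ := by
    apply lt_min one_pos
    apply div_pos (lt_min hε_pos hδ_pos) hM_pos
  -- the limit functions
  set g1 : ℕ → ℝ := fun i => if c i ≤ rstar i then 0 else h i with hg1_def
  set g2 : ℕ → ℝ := fun i => if rstar i = c i then max (-h i) 0 else 0 with hg2_def
  have hg1_sum : Summable g1 := by
    have := hh_sum.indicator {i | ¬ c i ≤ rstar i}
    refine this.congr fun i => ?_
    by_cases hci : c i ≤ rstar i <;>
      simp [hg1_def, Set.indicator_apply, hci]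
  have hg2_sum : Summable g2 := by
    refine summable_of_ne_finset_zero (s := hP_fin.toFinset) fun i hi => ?_
    have : ¬ c i ≤ rstar i := by
      simpa [Set.Finite.mem_toFinset] using hi
    have : ¬ rstar i = c i := fun he => this (le_of_eq he.symm)
    simp [hg2_def, this]
  have hg_sum : Summable (fun i => g1 i - g2 i) := hg1_sum.sub hg2_sum
  have hmin_sum : Summable (fun i => min (rstar i) (c i)) :=
    hrs_sum.of_nonneg_of_le (fun i => le_min (hrs_nn i) (hc_pos i).le)
      (fun i => min_le_left _ _)
  -- the eventual identity
  have key : ∀ t : ℝ, t ∈ Set.Ioo (0:ℝ) t₁ →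
      ((∑' i, min (rstar i + t * (r i - rstar i)) (σ ^ 2 / (s i) ^ 2))
          - ∑' i, min (rstar i) (σ ^ 2 / (s i) ^ 2)) / t
        = ∑' i, (g1 i - g2 i) := by
    intro t ht
    have htpos := ht.1
    have htM : t * M ≤ min ε δ := by
      have h1 : t ≤ min ε δ / M := le_trans ht.2.le (min_le_right _ _)
      calc t * M ≤ (min ε δ / M) * M := by nlinarith
        _ = min ε δ := by field_simp
    have hpoint : ∀ i, min (rstar i + t * (r i - rstar i)) (σ ^ 2 / (s i) ^ 2)
        = min (rstar i) (c i) + t * (g1 i - g2 i) := by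
      intro i
      have hhM : |h i| ≤ M := hM i
      have habs := abs_le.mp hhM
      show min (rstar i + t * h i) (c i) = _
      by_cases hc1 : c i ≤ rstar i
      · by_cases hq : rstar i = c i
        · -- Q' case
          have hg1i : g1 i = 0 := if_pos hc1
          have hg2i : g2 i = max (-h i) 0 := if_pos hq
          rw [hg1i, hg2i, hq]
          rcases le_or_gt 0 (h i) with hh0 | hh0
          · rw [min_eq_right (by nlinarith), min_self,
              max_eq_right (by linarith)]
            ring
          · rw [min_eq_left (by nlinarith), min_self,
              max_eq_left (by linarith)]
            ring
        · -- P \ Q' case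
          have hg1i : g1 i = 0 := if_pos hc1
          have hg2i : g2 i = 0 := if_neg hq
          have hδi := hδ i hc1 hq
          have h2 : t * M ≤ δ := le_trans htM (min_le_right _ _)
          rw [hg1i, hg2i, min_eq_right hc1, min_eq_right (by nlinarith)]
          ring
      · -- off P
        have hlt := not_le.mp hc1
        have hq : ¬ rstar i = c i := fun he => hc1 (le_of_eq he.symm)
        have hg1i : g1 i = h i := if_neg hc1
        have hg2i : g2 i = 0 := if_neg hq
        have hεi := hε i hc1
        have h2 : t * M ≤ ε := le_trans htM (min_le_left _ _)
        rw [hg1i, hg2i, min_eq_left hlt.le, min_eq_left (by nlinarith)]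
        ring
    rw [tsum_congr hpoint, Summable.tsum_add hmin_sum (hg_sum.mul_left t),
      tsum_mul_left]
    show (∑' i, min (rstar i) (c i) + t * ∑' i, (g1 i - g2 i)
      - ∑' i, min (rstar i) (c i)) / t = _
    rw [add_sub_cancel_left, mul_div_cancel_left₀ _ (ne_of_gt htpos)]
  have hev : ∀ᶠ t in 𝓝[>] (0:ℝ),
      ((∑' i, min (rstar i + t * (r i - rstar i)) (σ ^ 2 / (s i) ^ 2))
          - ∑' i, min (rstar i) (σ ^ 2 / (s i) ^ 2)) / t
        = ∑' i, (g1 i - g2 i) := by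
    filter_upwards [Ioo_mem_nhdsGT_of_mem ⟨le_refl (0:ℝ), ht₁_pos⟩] with t ht
    exact key t ht
  have htarget : (∑' i, (if σ ^ 2 / (s i) ^ 2 ≤ rstar i then (0 : ℝ) else r i - rstar i))
        - ∑' i, (if rstar i = σ ^ 2 / (s i) ^ 2 then max (-(r i - rstar i)) 0 else 0)
      = ∑' i, (g1 i - g2 i) := by
    rw [Summable.tsum_sub hg1_sum hg2_sum]
  rw [htarget]
  exact tendsto_const_nhds.congr' (hev.mono fun t ht => ht.symm)
end

section
/- Let (a_j)_{j≥1} be a positive nondecreasing sequence with a_j → ∞, (s_j)_{j≥1} a positive sequence with s_j → 0, Q > 0, σ > 0, σ_j := 1/s_j. Let r* be a maximizer of J over Θ₊²(a,Q) and set P := {i : r*_i ≥ σ²σ_i²}. Then for every r ∈ Θ₊²(a,Q): ∑_{i ∉ P} r_i + σ² ∑_{i ∈ P} σ_i² ≤ 2 J(r*); that is, the squared risk of the truncation estimator using the coordinate set P is at most twice the maximal value of J on the squared ellipsoid, uniformly over the ellipsoid. -/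
open Filter
open scoped Classical

private lemma aux_summable_of_mul {a r : ℕ → ℝ} (ha_pos : ∀ j, 0 < a j)
    (ha_mono : Monotone a) (hr : ∀ j, 0 ≤ r j)
    (h : Summable fun j => (a j)^2 * r j) : Summable r := by
  apply Summable.of_nonneg_of_le hr (fun j => ?_) (h.mul_left (1/(a 0)^2))
  have h0 : 0 < a 0 := ha_pos 0
  have hj : a 0 ≤ a j := ha_mono (Nat.zero_le j)
  have h2 : (a 0)^2 ≤ (a j)^2 := by nlinarith
  rw [one_div, mul_comm, ← div_eq_mul_inv, le_div_iff₀ (by positivity)]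
  nlinarith [hr j]

private lemma keyA (a : ℕ → ℝ) (ha_pos : ∀ j, 0 < a j) (ha_mono : Monotone a)
    (s : ℕ → ℝ) (hs_pos : ∀ j, 0 < s j)
    (Q : ℝ) (hQ : 0 < Q) (σ : ℝ) (hσ : 0 < σ)
    (rstar : ℕ → ℝ)
    (hr0 : ∀ j, 0 ≤ rstar j) (hrs : Summable fun j => (a j)^2 * rstar j)
    (hrQ : (∑' j, (a j)^2 * rstar j) ≤ Q^2)
    (hrstar_max : ∀ r : ℕ → ℝ,
      ((∀ j, 0 ≤ r j) ∧ (Summable fun j => (a j) ^ 2 * r j) ∧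
        (∑' j, (a j) ^ 2 * r j) ≤ Q ^ 2) →
      (∑' j, min (r j) (σ ^ 2 / (s j) ^ 2))
        ≤ ∑' j, min (rstar j) (σ ^ 2 / (s j) ^ 2))
    (i : ℕ) (hi : rstar i < σ ^ 2 / (s i) ^ 2) :
    Q^2 / (a i)^2 ≤ ∑' j, min (rstar j) (σ ^ 2 / (s j) ^ 2) := by
  have hai : 0 < a i := ha_pos i
  have hai2 : 0 < (a i)^2 := pow_pos hai 2
  have hcpos : ∀ j, 0 < σ^2/(s j)^2 :=
    fun j => div_pos (pow_pos hσ 2) (pow_pos (hs_pos j) 2)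
  by_cases hcase : Q^2/(a i)^2 ≤ σ^2/(s i)^2
  · -- test sequence: all mass at coordinate i
    set e : ℕ → ℝ := fun j => if j = i then Q^2/(a i)^2 else 0 with he_def
    have he0 : ∀ j, 0 ≤ e j := by
      intro j; simp only [he_def]; split
      · positivity
      · exact le_refl 0
    have heq : (fun j => (a j)^2 * e j) = fun j => if j = i then Q^2 else 0 := by
      funext j; by_cases h : j = i
      · subst h; simp only [he_def, if_pos rfl, eq_self_iff_true, if_true]; field_simp
      · simp [he_def, h]
    have hesum : Summable fun j => (a j)^2 * e j := by
      rw [heq]; exact (hasSum_ite_eq i (Q^2)).summable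
    have hetsum : (∑' j, (a j)^2 * e j) ≤ Q^2 := by
      rw [heq, tsum_ite_eq]
    have hmin : (fun j => min (e j) (σ ^ 2 / (s j) ^ 2))
        = fun j => if j = i then Q^2/(a i)^2 else 0 := by
      funext j; by_cases h : j = i
      · subst h; simp only [he_def, if_pos rfl]; exact min_eq_left hcase
      · simp only [he_def, if_neg h]; exact min_eq_left (hcpos j).le
    have := hrstar_max e ⟨he0, hesum, hetsum⟩
    rwa [hmin, tsum_ite_eq] at this
  · -- now σ²/s_i² < Q²/a_i²
    push_neg at hcase
    set M : ℝ := Q^2/(a i)^2 with hM_def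
    set ci : ℝ := σ^2/(s i)^2 with hci_def
    have hMpos : 0 < M := div_pos (pow_pos hQ 2) hai2
    have hnum : 0 < ci - rstar i := sub_pos.mpr hi
    have hden : 0 < M - rstar i := by
      have := hcpos i; linarith
    set L : ℝ := (ci - rstar i) / (M - rstar i) with hL_def
    have hL : 0 < L := div_pos hnum hden
    have hL1 : L ≤ 1 := (div_le_one hden).mpr (by linarith)
    have hLden : L * (M - rstar i) = ci - rstar i := div_mul_cancel₀ _ hden.ne'
    set b : ℕ → ℝ := fun j => min (rstar j) (σ^2/(s j)^2) with hb_def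
    have hb0 : ∀ j, 0 ≤ b j := fun j => le_min (hr0 j) (hcpos j).le
    have hble : ∀ j, b j ≤ rstar j := fun j => min_le_left _ _
    have hbi : b i = rstar i := min_eq_left hi.le
    have hab_sum : Summable fun j => (a j)^2 * b j := by
      apply Summable.of_nonneg_of_le (fun j => mul_nonneg (by positivity) (hb0 j)) (fun j => ?_) hrs
      exact mul_le_mul_of_nonneg_left (hble j) (by positivity)
    have hab_le : (∑' j, (a j)^2 * b j) ≤ Q^2 :=
      le_trans (Summable.tsum_le_tsum (fun j => mul_le_mul_of_nonneg_left (hble j) (by positivity))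
        hab_sum hrs) hrQ
    have hab_nonneg : 0 ≤ ∑' j, (a j)^2 * b j := tsum_nonneg (fun j => mul_nonneg (by positivity) (hb0 j))
    set r' : ℕ → ℝ := fun j => (1 - L) * b j + L * (if j = i then M else 0) with hr'_def
    have hr'0 : ∀ j, 0 ≤ r' j := by
      intro j; simp only [hr'_def]
      have : (0:ℝ) ≤ if j = i then M else 0 := by split; exacts [hMpos.le, le_refl _]
      have h1 : 0 ≤ (1 - L) * b j := mul_nonneg (by linarith) (hb0 j)
      nlinarith [hL.le]
    have heq : (fun j => (a j)^2 * r' j)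
        = fun j => (1 - L) * ((a j)^2 * b j) + L * (if j = i then Q^2 else 0) := by
      funext j; by_cases h : j = i
      · subst h; simp only [hr'_def, if_pos rfl, hM_def, eq_self_iff_true, if_true]; field_simp
      · simp only [hr'_def, if_neg h]; ring
    have hsum_ite : Summable (fun j => if j = i then Q^2 else (0:ℝ)) :=
      (hasSum_ite_eq i (Q^2)).summable
    have hr'sum : Summable fun j => (a j)^2 * r' j := by
      rw [heq]; exact (hab_sum.mul_left _).add (hsum_ite.mul_left _)
    have hr'tsum : (∑' j, (a j)^2 * r' j) ≤ Q^2 := by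
      rw [heq, Summable.tsum_add (hab_sum.mul_left _) (hsum_ite.mul_left _),
        tsum_mul_left, tsum_mul_left, tsum_ite_eq]
      nlinarith [hab_le, hab_nonneg, hL.le, hL1]
    have hr'i : r' i = ci := by
      have h1 : r' i = (1 - L) * b i + L * M := by
        simp [hr'_def]
      rw [h1, hbi]
      linear_combination hLden
    have hmin : (fun j => min (r' j) (σ ^ 2 / (s j) ^ 2))
        = fun j => (1 - L) * b j + (if j = i then ci - (1 - L) * b i else 0) := by
      funext j; by_cases h : j = i
      · rw [h, if_pos rfl, hr'i]
        have hms : min ci (σ ^ 2 / (s i) ^ 2) = ci := min_eq_left (le_of_eq hci_def)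
        rw [hms]; ring
      · have hj : r' j = (1 - L) * b j := by simp [hr'_def, h]
        rw [if_neg h, hj, add_zero]
        apply min_eq_left
        calc (1 - L) * b j ≤ 1 * b j :=
              mul_le_mul_of_nonneg_right (by linarith) (hb0 j)
          _ = b j := one_mul _
          _ ≤ σ ^ 2 / (s j) ^ 2 := min_le_right _ _
    have hbsum : Summable b :=
      Summable.of_nonneg_of_le hb0 hble
        (aux_summable_of_mul ha_pos ha_mono hr0 hrs)
    have hfinal := hrstar_max r' ⟨hr'0, hr'sum, hr'tsum⟩
    rw [hmin, Summable.tsum_add (hbsum.mul_left _) ((hasSum_ite_eq i _).summable),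
      tsum_mul_left, tsum_ite_eq] at hfinal
    -- hfinal : (1-L) * J* + (ci - (1-L) * b i) ≤ J*  where J* = ∑' b
    rw [hbi] at hfinal
    set J : ℝ := ∑' j, b j with hJ_def
    -- from hLden : L * (M - rstar i) = ci - rstar i
    nlinarith [hfinal, hLden, hL]

/-- if `r*` maximizes `J` over `Θ₊²(a,Q)` and `P = {i : r*_i ≥ σ²σ_i²}`,
then for every `r ∈ Θ₊²(a,Q)`:
`∑_{i ∉ P} r_i + σ² ∑_{i ∈ P} σ_i² ≤ 2 J(r*)`. -/
theorem truncation_risk_le_twice_J_max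
    (a : ℕ → ℝ) (ha_pos : ∀ j, 0 < a j) (ha_mono : Monotone a)
    (ha_top : Tendsto a atTop atTop)
    (s : ℕ → ℝ) (hs_pos : ∀ j, 0 < s j)
    (hs_zero : Tendsto s atTop (nhds 0))
    (Q : ℝ) (hQ : 0 < Q) (σ : ℝ) (hσ : 0 < σ)
    (rstar : ℕ → ℝ)
    (hrstar_mem : (∀ j, 0 ≤ rstar j) ∧ (Summable fun j => (a j) ^ 2 * rstar j) ∧
      (∑' j, (a j) ^ 2 * rstar j) ≤ Q ^ 2)
    (hrstar_max : ∀ r : ℕ → ℝ,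
      ((∀ j, 0 ≤ r j) ∧ (Summable fun j => (a j) ^ 2 * r j) ∧
        (∑' j, (a j) ^ 2 * r j) ≤ Q ^ 2) →
      (∑' j, min (r j) (σ ^ 2 / (s j) ^ 2))
        ≤ ∑' j, min (rstar j) (σ ^ 2 / (s j) ^ 2)) :
    ∀ r : ℕ → ℝ,
      ((∀ j, 0 ≤ r j) ∧ (Summable fun j => (a j) ^ 2 * r j) ∧
        (∑' j, (a j) ^ 2 * r j) ≤ Q ^ 2) →
      (∑' i, (if σ ^ 2 / (s i) ^ 2 ≤ rstar i then (0 : ℝ) else r i))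
        + σ ^ 2 * (∑' i, (if σ ^ 2 / (s i) ^ 2 ≤ rstar i then 1 / (s i) ^ 2 else 0))
      ≤ 2 * ∑' j, min (rstar j) (σ ^ 2 / (s j) ^ 2) := by
  obtain ⟨hr0, hrs, hrQ⟩ := hrstar_mem
  rintro r ⟨h1, h2, h3⟩
  have hQ2 : 0 < Q^2 := pow_pos hQ 2
  have hcpos : ∀ j, 0 < σ^2/(s j)^2 :=
    fun j => div_pos (pow_pos hσ 2) (pow_pos (hs_pos j) 2)
  have hb0 : ∀ j, (0:ℝ) ≤ min (rstar j) (σ^2/(s j)^2) :=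
    fun j => le_min (hr0 j) (hcpos j).le
  have hbsum : Summable fun j => min (rstar j) (σ^2/(s j)^2) :=
    Summable.of_nonneg_of_le hb0 (fun j => min_le_left _ _)
      (aux_summable_of_mul ha_pos ha_mono hr0 hrs)
  have hJ0 : (0:ℝ) ≤ ∑' j, min (rstar j) (σ^2/(s j)^2) := tsum_nonneg hb0
  set J : ℝ := ∑' j, min (rstar j) (σ^2/(s j)^2) with hJ_def
  -- Part 1 : the P-part
  have hpart2 : σ ^ 2 * (∑' i, (if σ ^ 2 / (s i) ^ 2 ≤ rstar i then 1 / (s i) ^ 2 else 0)) ≤ J := by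
    have hrw : (fun i => σ^2 * (if σ ^ 2 / (s i) ^ 2 ≤ rstar i then 1 / (s i) ^ 2 else 0))
        = fun i => if σ ^ 2 / (s i) ^ 2 ≤ rstar i then σ^2/(s i)^2 else 0 := by
      funext i; by_cases h : σ ^ 2 / (s i) ^ 2 ≤ rstar i
      · rw [if_pos h, if_pos h, mul_one_div]
      · rw [if_neg h, if_neg h, mul_zero]
    rw [← tsum_mul_left, hrw]
    apply Summable.tsum_le_tsum _ _ hbsum
    · intro j; split
      · next h => exact le_of_eq (min_eq_right h).symm
      · exact hb0 j
    · apply Summable.of_nonneg_of_le _ _ hbsum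
      · intro j; split
        · exact (hcpos j).le
        · exact le_refl 0
      · intro j; split
        · next h => exact le_of_eq (min_eq_right h).symm
        · exact hb0 j
  -- Part 2 : the non-P part
  have hpart1 : (∑' i, (if σ ^ 2 / (s i) ^ 2 ≤ rstar i then (0 : ℝ) else r i)) ≤ J := by
    have hbound : ∀ i, (if σ ^ 2 / (s i) ^ 2 ≤ rstar i then (0 : ℝ) else r i)
        ≤ (J / Q^2) * ((a i)^2 * r i) := by
      intro i
      split
      · have : 0 ≤ (J / Q^2) * ((a i)^2 * r i) := by
          apply mul_nonneg (div_nonneg hJ0 hQ2.le)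
          exact mul_nonneg (by positivity) (h1 i)
        linarith
      · next h =>
        push_neg at h
        have hk := keyA a ha_pos ha_mono s hs_pos Q hQ σ hσ rstar hr0 hrs hrQ hrstar_max i h
        rw [div_le_iff₀ (pow_pos (ha_pos i) 2)] at hk
        rw [div_mul_eq_mul_div, le_div_iff₀ hQ2]
        nlinarith [h1 i]
    have hgsum : Summable fun i => (if σ ^ 2 / (s i) ^ 2 ≤ rstar i then (0 : ℝ) else r i) := by
      apply Summable.of_nonneg_of_le _ hbound (h2.mul_left (J / Q^2))
      intro i; split; exacts [le_refl 0, h1 i]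
    calc (∑' i, (if σ ^ 2 / (s i) ^ 2 ≤ rstar i then (0 : ℝ) else r i))
        ≤ ∑' i, (J / Q^2) * ((a i)^2 * r i) :=
          Summable.tsum_le_tsum hbound hgsum (h2.mul_left _)
      _ = (J / Q^2) * ∑' i, (a i)^2 * r i := tsum_mul_left
      _ ≤ (J / Q^2) * Q^2 :=
          mul_le_mul_of_nonneg_left h3 (div_nonneg hJ0 hQ2.le)
      _ = J := div_mul_cancel₀ _ hQ2.ne'
  linarith
end

section
/- Let (a_j)_{j≥1} be a positive nondecreasing sequence with a_j → ∞, (s_j)_{j≥1} a positive sequence with s_j → 0, Q > 0, σ > 0, σ_j := 1/s_j. Then the best truncation-estimator squared risk over the ellipsoid is at most twice the supremum of J over the squared positive ellipsoid: inf over finite subsets P ⊆ {1,2,…} of ( sup_{r ∈ Θ₊²(a,Q)} ∑_{i ∉ P} r_i + σ² ∑_{i ∈ P} σ_i² ) ≤ 2 · sup_{r ∈ Θ₊²(a,Q)} J(r). -/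
open Filter
open scoped Classical

/- Indexing convention: coordinates are indexed by `i : ℕ` (index `i` representing
coordinate `i+1` of the paper); finite coordinate sets `P ⊆ {1,2,…}` become
`P : Finset ℕ`.  With `σ_i := 1/s_i`, the squared positive ellipsoid `Θ₊²(a,Q)`
consists of the nonnegative sequences `r` with `∑ a_i² r_i ≤ Q²`, and
`J r := ∑' i, min (r i) (σ²/s_i²)`. -/

set_option maxHeartbeats 2000000 in
/-- the best truncation-estimator squared risk over the ellipsoid is
at most twice the supremum of `J` over the squared positive ellipsoid:
`inf_P sup_{r ∈ Θ₊²(a,Q)} ( ∑_{i ∉ P} r_i + σ² ∑_{i ∈ P} σ_i² ) ≤ 2 sup_{r ∈ Θ₊²(a,Q)} J(r)`. -/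
theorem best_truncation_le_twice_sup_J
    (a : ℕ → ℝ) (ha_pos : ∀ j, 0 < a j) (ha_mono : Monotone a)
    (ha_top : Tendsto a atTop atTop)
    (s : ℕ → ℝ) (hs_pos : ∀ j, 0 < s j)
    (hs_zero : Tendsto s atTop (nhds 0))
    (Q : ℝ) (hQ : 0 < Q) (σ : ℝ) (hσ : 0 < σ) :
    (⨅ P : Finset ℕ,
      sSup {t : ℝ | ∃ r : ℕ → ℝ,
        ((∀ j, 0 ≤ r j) ∧ (Summable fun j => (a j) ^ 2 * r j) ∧
          (∑' j, (a j) ^ 2 * r j) ≤ Q ^ 2) ∧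
        t = (∑' i, (if i ∈ P then (0 : ℝ) else r i))
              + σ ^ 2 * ∑ i ∈ P, 1 / (s i) ^ 2})
    ≤ 2 * sSup {t : ℝ | ∃ r : ℕ → ℝ,
        ((∀ j, 0 ≤ r j) ∧ (Summable fun j => (a j) ^ 2 * r j) ∧
          (∑' j, (a j) ^ 2 * r j) ≤ Q ^ 2) ∧
        t = ∑' j, min (r j) (σ ^ 2 / (s j) ^ 2)} := by
  classical
  have ha0 : (0:ℝ) < a 0 := ha_pos 0
  set A := {t : ℝ | ∃ r : ℕ → ℝ,
        ((∀ j, 0 ≤ r j) ∧ (Summable fun j => (a j) ^ 2 * r j) ∧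
          (∑' j, (a j) ^ 2 * r j) ≤ Q ^ 2) ∧
        t = ∑' j, min (r j) (σ ^ 2 / (s j) ^ 2)} with hAdef
  -- key summability / bound for admissible r
  have hkey : ∀ r : ℕ → ℝ, (∀ j, 0 ≤ r j) → (Summable fun j => (a j)^2*r j) →
      (∑' j, (a j)^2*r j) ≤ Q^2 → Summable r ∧ ∑' j, r j ≤ Q^2 / a 0^2 := by
    intro r hr0 hsum hQr
    have hle : ∀ j, r j ≤ (a j)^2 * r j / a 0^2 := by
      intro j
      rw [le_div_iff₀ (by positivity)]
      have h1 : a 0 ^ 2 ≤ a j ^ 2 := by nlinarith [ha_mono (Nat.zero_le j), ha_pos 0]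
      nlinarith [hr0 j]
    have hsr : Summable r := Summable.of_nonneg_of_le hr0 hle (hsum.div_const _)
    refine ⟨hsr, ?_⟩
    calc ∑' j, r j ≤ ∑' j, (a j)^2*r j / a 0^2 := Summable.tsum_le_tsum hle hsr (hsum.div_const _)
      _ = (∑' j, (a j)^2*r j) / a 0^2 := by rw [tsum_div_const]
      _ ≤ Q^2 / a 0^2 := (div_le_div_iff_of_pos_right (by positivity)).mpr hQr
  have hBdd : BddAbove A := by
    refine ⟨Q^2 / a 0^2, ?_⟩
    rintro t ⟨r, ⟨hr0, hsum, hQr⟩, rfl⟩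
    obtain ⟨hsr, hrQ⟩ := hkey r hr0 hsum hQr
    have hmin : Summable fun j => min (r j) (σ^2/(s j)^2) := by
      refine Summable.of_nonneg_of_le (fun j => le_min (hr0 j) (by positivity)) (fun j => min_le_left _ _) hsr
    calc ∑' j, min (r j) (σ^2/(s j)^2) ≤ ∑' j, r j :=
          Summable.tsum_le_tsum (fun j => min_le_left _ _) hmin hsr
      _ ≤ Q^2 / a 0^2 := hrQ
  set S := sSup A with hSdef
  -- partial sums of a_i^2 σ^2 / s_i^2
  set T : ℕ → ℝ := fun n => ∑ i ∈ Finset.range n, (a i)^2 * (σ^2/(s i)^2) with hTdef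
  have hterm_pos : ∀ i, 0 < (a i)^2 * (σ^2/(s i)^2) := by
    intro i
    have := hs_pos i
    have := ha_pos i
    positivity
  have hex : ∃ n, Q^2 < T n := by
    have hε : (0:ℝ) < a 0 * σ / Q := by positivity
    obtain ⟨n, hn⟩ := (hs_zero.eventually (gt_mem_nhds hε)).exists
    refine ⟨n+1, ?_⟩
    have hsn := hs_pos n
    have h1 : Q^2 * (s n)^2 < a 0^2 * σ^2 := by
      have h2 : s n * Q < a 0 * σ := by
        rw [← lt_div_iff₀ hQ]; exact hn
      nlinarith [mul_pos hsn hQ]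
    have h3 : Q^2 < a 0^2 * (σ^2 / (s n)^2) := by
      rw [mul_div_assoc' , lt_div_iff₀ (by positivity)]
      nlinarith
    have h4 : a 0^2 * (σ^2/(s n)^2) ≤ a n^2 * (σ^2/(s n)^2) := by
      have h5 : a 0^2 ≤ a n^2 := by nlinarith [ha_mono (Nat.zero_le n), ha_pos 0]
      have h6 : (0:ℝ) ≤ σ^2/(s n)^2 := by positivity
      nlinarith
    have h7 : a n^2 * (σ^2/(s n)^2) ≤ T (n+1) := by
      refine Finset.single_le_sum (f := fun i => (a i)^2 * (σ^2/(s i)^2)) ?_ (by simp)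
      intro i _
      exact (hterm_pos i).le
    linarith
  set M := Nat.find hex with hMdef
  have hMspec : Q^2 < T M := Nat.find_spec hex
  have hM0 : M ≠ 0 := by
    intro h
    rw [h] at hMspec
    simp only [hTdef, Finset.range_zero, Finset.sum_empty] at hMspec
    nlinarith
  obtain ⟨N, hN⟩ : ∃ N, M = N + 1 := ⟨M - 1, (Nat.succ_pred_eq_of_ne_zero hM0).symm⟩
  have hTN : T N ≤ Q^2 := le_of_not_gt (Nat.find_min hex (by omega))
  have hTN1 : Q^2 < T (N+1) := hN ▸ hMspec
  have hTsucc : T (N+1) = T N + (a N)^2 * (σ^2/(s N)^2) := Finset.sum_range_succ _ _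
  have haN : (0:ℝ) < a N := ha_pos N
  -- Lower bound A : σ² ∑_{i<N} 1/s_i² ≤ S
  have hA : σ^2 * ∑ i ∈ Finset.range N, 1/(s i)^2 ≤ S := by
    set rA : ℕ → ℝ := fun i => if i < N then σ^2/(s i)^2 else 0 with hrAdef
    have hzero : ∀ b ∉ Finset.range N, rA b = 0 := by
      intro b hb
      simp only [Finset.mem_range, not_lt] at hb
      simp only [hrAdef]
      rw [if_neg (not_lt.mpr hb)]
    have hzero2 : ∀ b ∉ Finset.range N, (a b)^2 * rA b = 0 := by
      intro b hb; rw [hzero b hb, mul_zero]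
    have hsumA : Summable fun j => (a j)^2 * rA j := summable_of_ne_finset_zero hzero2
    have htsumA : (∑' j, (a j)^2 * rA j) = T N := by
      rw [tsum_eq_sum hzero2]
      refine Finset.sum_congr rfl fun i hi => ?_
      simp only [hrAdef]
      rw [if_pos (Finset.mem_range.mp hi)]
    have hminzero : ∀ b ∉ Finset.range N, min (rA b) (σ^2/(s b)^2) = 0 := by
      intro b hb
      rw [hzero b hb]
      exact min_eq_left (by positivity)
    have hJA : (∑' j, min (rA j) (σ^2/(s j)^2)) = σ^2 * ∑ i ∈ Finset.range N, 1/(s i)^2 := by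
      rw [tsum_eq_sum hminzero, Finset.mul_sum]
      refine Finset.sum_congr rfl fun i hi => ?_
      simp only [hrAdef]
      rw [if_pos (Finset.mem_range.mp hi), min_self, mul_one_div]
    refine le_csSup hBdd ?_
    refine ⟨rA, ⟨fun j => ?_, hsumA, by rw [htsumA]; exact hTN⟩, hJA.symm⟩
    simp only [hrAdef]
    split <;> positivity
  -- reduction of the main goal
  have hmain : Q^2/(a N)^2 + σ^2 * ∑ i ∈ Finset.range N, 1/(s i)^2 ≤ 2*S →
      (⨅ P : Finset ℕ,
      sSup {t : ℝ | ∃ r : ℕ → ℝ,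
        ((∀ j, 0 ≤ r j) ∧ (Summable fun j => (a j) ^ 2 * r j) ∧
          (∑' j, (a j) ^ 2 * r j) ≤ Q ^ 2) ∧
        t = (∑' i, (if i ∈ P then (0 : ℝ) else r i))
              + σ ^ 2 * ∑ i ∈ P, 1 / (s i) ^ 2}) ≤ 2*S := by
    intro h2
    -- basic facts about the sets for arbitrary P
    have hmem0 : ∀ P : Finset ℕ, σ ^ 2 * ∑ i ∈ P, 1 / (s i) ^ 2 ∈
        {t : ℝ | ∃ r : ℕ → ℝ,
        ((∀ j, 0 ≤ r j) ∧ (Summable fun j => (a j) ^ 2 * r j) ∧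
          (∑' j, (a j) ^ 2 * r j) ≤ Q ^ 2) ∧
        t = (∑' i, (if i ∈ P then (0 : ℝ) else r i))
              + σ ^ 2 * ∑ i ∈ P, 1 / (s i) ^ 2} := by
      intro P
      refine ⟨fun _ => 0, ⟨fun j => le_refl 0, by simpa using summable_zero, by simp; positivity⟩, ?_⟩
      simp
    have hbddP : ∀ P : Finset ℕ, BddAbove {t : ℝ | ∃ r : ℕ → ℝ,
        ((∀ j, 0 ≤ r j) ∧ (Summable fun j => (a j) ^ 2 * r j) ∧
          (∑' j, (a j) ^ 2 * r j) ≤ Q ^ 2) ∧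
        t = (∑' i, (if i ∈ P then (0 : ℝ) else r i))
              + σ ^ 2 * ∑ i ∈ P, 1 / (s i) ^ 2} := by
      intro P
      refine ⟨Q^2 / a 0^2 + σ ^ 2 * ∑ i ∈ P, 1 / (s i) ^ 2, ?_⟩
      rintro t ⟨r, ⟨hr0, hsum, hQr⟩, rfl⟩
      obtain ⟨hsr, hrQ⟩ := hkey r hr0 hsum hQr
      have hg0 : ∀ j, (0:ℝ) ≤ if j ∈ P then (0:ℝ) else r j := by
        intro j; split
        · exact le_refl 0
        · exact hr0 j
      have hgle : ∀ j, (if j ∈ P then (0:ℝ) else r j) ≤ r j := by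
        intro j; split
        · exact hr0 j
        · exact le_refl _
      have hgsum : Summable fun j => if j ∈ P then (0:ℝ) else r j :=
        Summable.of_nonneg_of_le hg0 hgle hsr
      have : (∑' i, (if i ∈ P then (0:ℝ) else r i)) ≤ Q^2 / a 0^2 :=
        le_trans (Summable.tsum_le_tsum hgle hgsum hsr) hrQ
      linarith
    refine le_trans (ciInf_le ?_ (Finset.range N)) ?_
    · refine ⟨0, ?_⟩
      rintro x ⟨P, rfl⟩
      refine le_trans ?_ (le_csSup (hbddP P) (hmem0 P))
      positivity
    · refine csSup_le ⟨_, hmem0 (Finset.range N)⟩ ?_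
      rintro t ⟨r, ⟨hr0, hsum, hQr⟩, rfl⟩
      obtain ⟨hsr, hrQ⟩ := hkey r hr0 hsum hQr
      have hg0 : ∀ j, (0:ℝ) ≤ if j ∈ Finset.range N then (0:ℝ) else r j := by
        intro j; split
        · exact le_refl 0
        · exact hr0 j
      have hgle : ∀ j, (if j ∈ Finset.range N then (0:ℝ) else r j) ≤ r j := by
        intro j; split
        · exact hr0 j
        · exact le_refl _
      have hgsum : Summable fun j => if j ∈ Finset.range N then (0:ℝ) else r j :=
        Summable.of_nonneg_of_le hg0 hgle hsr
      have hpt : ∀ j, (a N)^2 * (if j ∈ Finset.range N then (0:ℝ) else r j) ≤ (a j)^2 * r j := by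
        intro j
        by_cases hj : j ∈ Finset.range N
        · rw [if_pos hj, mul_zero]
          have := hr0 j; have := ha_pos j; positivity
        · rw [if_neg hj]
          have hNj : N ≤ j := by simpa [Finset.mem_range, not_lt] using hj
          have h5 : (a N)^2 ≤ (a j)^2 := by nlinarith [ha_mono hNj, ha_pos N]
          exact mul_le_mul_of_nonneg_right h5 (hr0 j)
      have hmul : (a N)^2 * (∑' i, (if i ∈ Finset.range N then (0:ℝ) else r i)) ≤ Q^2 := by
        rw [← tsum_mul_left]
        exact le_trans (Summable.tsum_le_tsum hpt (hgsum.mul_left _) hsum) hQr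
      have hdiv : (∑' i, (if i ∈ Finset.range N then (0:ℝ) else r i)) ≤ Q^2 / (a N)^2 := by
        rw [le_div_iff₀ (by positivity)]
        linarith [hmul]
      linarith
  -- two cases on whether a_N² σ²/s_N² ≥ Q²
  rcases le_or_gt (Q^2) ((a N)^2 * (σ^2/(s N)^2)) with hcase | hcase
  · -- case 1 : S ≥ Q²/a_N²
    have hB : Q^2/(a N)^2 ≤ S := by
      set rB : ℕ → ℝ := fun i => if i = N then Q^2/(a N)^2 else 0 with hrBdef
      have hzero2 : ∀ b ∉ ({N} : Finset ℕ), (a b)^2 * rB b = 0 := by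
        intro b hb
        simp only [Finset.mem_singleton] at hb
        simp [hrBdef, if_neg hb]
      have hsumB : Summable fun j => (a j)^2 * rB j := summable_of_ne_finset_zero hzero2
      have hrBN : rB N = Q^2/(a N)^2 := by simp [hrBdef]
      have htsumB : (∑' j, (a j)^2 * rB j) = Q^2 := by
        rw [tsum_eq_sum hzero2, Finset.sum_singleton, hrBN]
        field_simp
      have hminzero : ∀ b ∉ ({N} : Finset ℕ), min (rB b) (σ^2/(s b)^2) = 0 := by
        intro b hb
        simp only [Finset.mem_singleton] at hb
        simp only [hrBdef, if_neg hb]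
        exact min_eq_left (by positivity)
      have hJB : (∑' j, min (rB j) (σ^2/(s j)^2)) = Q^2/(a N)^2 := by
        rw [tsum_eq_sum hminzero, Finset.sum_singleton, hrBN]
        refine min_eq_left ?_
        rw [div_le_iff₀ (by positivity)]
        calc Q^2 ≤ (a N)^2 * (σ^2/(s N)^2) := hcase
          _ = σ^2/(s N)^2 * (a N)^2 := by ring
      refine le_csSup hBdd ?_
      refine ⟨rB, ⟨fun j => ?_, hsumB, by rw [htsumB]⟩, hJB.symm⟩
      simp only [hrBdef]; split <;> positivity
    exact hmain (by linarith)
  · -- case 2 : term N < Q²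
    have hC : σ^2 * ∑ i ∈ Finset.range N, 1/(s i)^2 + (Q^2 - T N)/(a N)^2 ≤ S := by
      set rC : ℕ → ℝ := fun i =>
        if i < N then σ^2/(s i)^2 else if i = N then (Q^2 - T N)/(a N)^2 else 0 with hrCdef
      have hQT : (0:ℝ) ≤ Q^2 - T N := by linarith
      have hzero : ∀ b ∉ Finset.range (N+1), rC b = 0 := by
        intro b hb
        simp only [Finset.mem_range, not_lt] at hb
        simp only [hrCdef]
        rw [if_neg (by omega), if_neg (by omega)]
      have hzero2 : ∀ b ∉ Finset.range (N+1), (a b)^2 * rC b = 0 := by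
        intro b hb; rw [hzero b hb, mul_zero]
      have hsumC : Summable fun j => (a j)^2 * rC j := summable_of_ne_finset_zero hzero2
      have hrCN : rC N = (Q^2 - T N)/(a N)^2 := by
        simp [hrCdef]
      have hrClt : ∀ i, i < N → rC i = σ^2/(s i)^2 := by
        intro i hi
        simp only [hrCdef]
        rw [if_pos hi]
      have htsumC : (∑' j, (a j)^2 * rC j) = Q^2 := by
        rw [tsum_eq_sum hzero2, Finset.sum_range_succ, hrCN]
        have h8 : ∑ i ∈ Finset.range N, (a i)^2 * rC i = T N := by
          refine Finset.sum_congr rfl fun i hi => ?_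
          rw [hrClt i (Finset.mem_range.mp hi)]
        rw [h8]
        field_simp
        ring
      have hminzero : ∀ b ∉ Finset.range (N+1), min (rC b) (σ^2/(s b)^2) = 0 := by
        intro b hb
        rw [hzero b hb]
        exact min_eq_left (by positivity)
      have hJC : (∑' j, min (rC j) (σ^2/(s j)^2))
          = σ^2 * ∑ i ∈ Finset.range N, 1/(s i)^2 + (Q^2 - T N)/(a N)^2 := by
        rw [tsum_eq_sum hminzero, Finset.sum_range_succ, hrCN]
        have h9 : min ((Q^2 - T N)/(a N)^2) (σ^2/(s N)^2) = (Q^2 - T N)/(a N)^2 := by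
          refine min_eq_left ?_
          rw [div_le_div_iff₀ (by positivity) (pow_pos (hs_pos N) 2)]
          have h13 : (σ^2/(s N)^2)*(s N)^2 = σ^2 :=
            div_mul_cancel₀ _ (ne_of_gt (pow_pos (hs_pos N) 2))
          have h14 : a N^2*(σ^2/(s N)^2)*(s N)^2 = σ^2 * a N^2 := by
            rw [mul_assoc, h13]; ring
          nlinarith [hTsucc, hTN1, pow_pos (hs_pos N) 2, h14]
        rw [h9]
        have h12 : ∑ i ∈ Finset.range N, min (rC i) (σ^2/(s i)^2)
            = σ^2 * ∑ i ∈ Finset.range N, 1/(s i)^2 := by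
          rw [Finset.mul_sum]
          refine Finset.sum_congr rfl fun i hi => ?_
          rw [hrClt i (Finset.mem_range.mp hi), min_self, mul_one_div]
        rw [h12]
      refine le_csSup hBdd ?_
      refine ⟨rC, ⟨fun j => ?_, hsumC, by rw [htsumC]⟩, hJC.symm⟩
      simp only [hrCdef]
      split
      · positivity
      · split
        · exact div_nonneg hQT (le_of_lt (pow_pos haN 2))
        · exact le_refl 0
    have hTdiv : T N / (a N)^2 ≤ σ^2 * ∑ i ∈ Finset.range N, 1/(s i)^2 := by
      have h10 : T N ≤ (a N)^2 * (σ^2 * ∑ i ∈ Finset.range N, 1/(s i)^2) := by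
        have h11 : (a N)^2 * (σ^2 * ∑ i ∈ Finset.range N, 1/(s i)^2)
            = ∑ i ∈ Finset.range N, (a N)^2 * (σ^2/(s i)^2) := by
          rw [Finset.mul_sum, Finset.mul_sum]
          refine Finset.sum_congr rfl fun i _ => ?_
          rw [mul_one_div]
        rw [h11]
        refine Finset.sum_le_sum fun i hi => ?_
        have hiN : i ≤ N := le_of_lt (Finset.mem_range.mp hi)
        have h5 : (a i)^2 ≤ (a N)^2 := by nlinarith [ha_mono hiN, ha_pos i]
        have h6 : (0:ℝ) ≤ σ^2/(s i)^2 := by positivity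
        exact mul_le_mul_of_nonneg_right h5 h6
      rw [div_le_iff₀ (by positivity)]
      linarith [h10]
    apply hmain
    have hsplit : (Q^2 - T N)/(a N)^2 + T N/(a N)^2 = Q^2/(a N)^2 := by
      rw [← add_div]
      ring_nf
    linarith [hA, hC, hTdiv]
end

section
/- Let (a_j)_{j≥1} be a positive nondecreasing sequence, (s_j)_{j≥1} a positive nonincreasing sequence, Q > 0, σ > 0. Then sup_{r ∈ Θ₊²(a,Q)} ∑_{j=1}^∞ min(r_j, σ²/s_j²) ≤ inf_{D ≥ 0} ( Q²/a_{D+1}² + σ² ∑_{j=1}^D 1/s_j² ); that is, the best truncation risk on any hyperrectangle contained in the ellipsoid is bounded by the best truncated-series risk on the ellipsoid. -/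
/- Indexing convention: coordinates are indexed by `j : ℕ` (index `j` representing
coordinate `j+1` of the paper).  So `a_{D+1}` becomes `a D` and `∑_{j=1}^D 1/s_j²`
becomes `∑ j in Finset.range D, 1/(s j)^2`.  The squared positive ellipsoid
`Θ₊²(a,Q)` consists of the nonnegative sequences `r` with `∑ a_j² r_j ≤ Q²`. -/

/-- the best truncation risk on any hyperrectangle contained in the
ellipsoid is bounded by the best truncated-series risk on the ellipsoid:
`sup_{r ∈ Θ₊²(a,Q)} ∑_j min(r_j, σ²/s_j²) ≤ inf_{D ≥ 0} ( Q²/a_{D+1}² + σ² ∑_{j=1}^D 1/s_j² )`. -/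
theorem sup_hyperrectangle_le_truncated_series
    (a : ℕ → ℝ) (ha_pos : ∀ j, 0 < a j) (ha_mono : Monotone a)
    (s : ℕ → ℝ) (hs_pos : ∀ j, 0 < s j) (hs_anti : Antitone s)
    (Q : ℝ) (hQ : 0 < Q) (σ : ℝ) (hσ : 0 < σ) :
    sSup {t : ℝ | ∃ r : ℕ → ℝ,
        ((∀ j, 0 ≤ r j) ∧ (Summable fun j => (a j) ^ 2 * r j) ∧
          (∑' j, (a j) ^ 2 * r j) ≤ Q ^ 2) ∧
        t = ∑' j, min (r j) (σ ^ 2 / (s j) ^ 2)}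
    ≤ ⨅ D : ℕ, (Q ^ 2 / (a D) ^ 2 + σ ^ 2 * ∑ j ∈ Finset.range D, 1 / (s j) ^ 2) := by
  refine le_ciInf fun D => Real.sSup_le ?_ ?_
  · rintro t ⟨r, ⟨hr0, hsum, hQ2⟩, rfl⟩
    have ha0 : ∀ j, (0:ℝ) < (a j)^2 := fun j => pow_pos (ha_pos j) 2
    set f : ℕ → ℝ := fun j => min (r j) (σ^2/(s j)^2) with hfdef
    have hfnn : ∀ j, 0 ≤ f j := fun j =>
      le_min (hr0 j) (by positivity)
    have hrle : ∀ k j, k ≤ j → f j ≤ (a j)^2 * r j / (a k)^2 := by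
      intro k j hkj
      have h2 : (a k)^2 * r j ≤ (a j)^2 * r j :=
        mul_le_mul_of_nonneg_right
          (pow_le_pow_left₀ (ha_pos k).le (ha_mono hkj) 2) (hr0 j)
      calc f j ≤ r j := min_le_left _ _
        _ ≤ (a j)^2 * r j / (a k)^2 := by
            rw [le_div_iff₀ (ha0 k), mul_comm]; exact h2
    have hsumf : Summable f :=
      Summable.of_nonneg_of_le hfnn (fun j => hrle 0 j (Nat.zero_le j))
        (hsum.div_const _)
    have hsplit := hsumf.sum_add_tsum_nat_add D
    have hsplitg := hsum.sum_add_tsum_nat_add D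
    -- head bound
    have hhead : ∑ j ∈ Finset.range D, f j
        ≤ σ^2 * ∑ j ∈ Finset.range D, 1/(s j)^2 := by
      rw [Finset.mul_sum]
      refine Finset.sum_le_sum fun j _ => ?_
      calc f j ≤ σ^2/(s j)^2 := min_le_right _ _
        _ = σ^2 * (1/(s j)^2) := by ring
    -- tail bound
    have hsumf_tail : Summable fun n => f (n + D) :=
      (summable_nat_add_iff D).mpr hsumf
    have hsumg_tail : Summable fun n => (a (n+D))^2 * r (n+D) :=
      (summable_nat_add_iff D).mpr hsum
    have htail1 : (∑' n, f (n + D))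
        ≤ ∑' n, (a (n+D))^2 * r (n+D) / (a D)^2 :=
      Summable.tsum_le_tsum (fun n => hrle D (n+D) (Nat.le_add_left D n))
        hsumf_tail (hsumg_tail.div_const _)
    have htail2 : (∑' n, (a (n+D))^2 * r (n+D) / (a D)^2)
        = (∑' n, (a (n+D))^2 * r (n+D)) / (a D)^2 := tsum_div_const
    have hheadg : 0 ≤ ∑ j ∈ Finset.range D, (a j)^2 * r j :=
      Finset.sum_nonneg fun j _ => mul_nonneg (sq_nonneg _) (hr0 j)
    have htail3 : (∑' n, (a (n+D))^2 * r (n+D)) ≤ Q^2 := by linarith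
    have htail : (∑' n, f (n + D)) ≤ Q^2 / (a D)^2 := by
      refine htail1.trans ?_
      rw [htail2]
      gcongr
    linarith
  · positivity
end

section
/- Let (a_j)_{j≥1} be a positive nondecreasing sequence with a_j → ∞, (s_j)_{j≥1} a positive nonincreasing sequence with s_j → 0, Q > 0, σ > 0. Then sup_{r ∈ Θ₊²(a,Q)} ∑_{j=1}^∞ min(r_j, σ²/s_j²) ≤ inf_{D ≥ 0} ( Q²/a_{D+1}² + σ² ∑_{j=1}^D 1/s_j² ) ≤ 2 · sup_{r ∈ Θ₊²(a,Q)} ∑_{j=1}^∞ min(r_j, σ²/s_j²); that is, the best truncated-series risk on the ellipsoid is determined, up to a factor 2, by the supremum over hyperrectangles contained in the ellipsoid of the best truncation risk on the hyperrectangle. -/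
open Filter

private lemma trunc_risk_le_term
    (a : ℕ → ℝ) (ha_pos : ∀ j, 0 < a j) (ha_mono : Monotone a)
    (s : ℕ → ℝ)
    (Q : ℝ) (σ : ℝ)
    (r : ℕ → ℝ) (hr0 : ∀ j, 0 ≤ r j) (hrsum : Summable fun j => (a j) ^ 2 * r j)
    (hrQ : (∑' j, (a j) ^ 2 * r j) ≤ Q ^ 2) (D : ℕ) :
    (∑' j, min (r j) (σ ^ 2 / (s j) ^ 2))
      ≤ Q ^ 2 / (a D) ^ 2 + σ ^ 2 * ∑ j ∈ Finset.range D, 1 / (s j) ^ 2 := by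
  have ha0 : ∀ j, 0 < (a j) ^ 2 := fun j => pow_pos (ha_pos j) 2
  have hrle : ∀ j, r j ≤ ((a j) ^ 2 * r j) / (a 0) ^ 2 := by
    intro j
    rw [le_div_iff₀ (ha0 0)]
    have := pow_le_pow_left₀ (ha_pos 0).le (ha_mono (Nat.zero_le j)) 2
    nlinarith [hr0 j]
  have hrsumm : Summable r :=
    Summable.of_nonneg_of_le hr0 hrle (hrsum.div_const _)
  have hminnn : ∀ j, 0 ≤ min (r j) (σ ^ 2 / (s j) ^ 2) := fun j =>
    le_min (hr0 j) (div_nonneg (sq_nonneg σ) (sq_nonneg (s j)))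
  have hminsumm : Summable (fun j => min (r j) (σ ^ 2 / (s j) ^ 2)) :=
    Summable.of_nonneg_of_le hminnn (fun j => min_le_left _ _) hrsumm
  rw [← Summable.sum_add_tsum_nat_add D hminsumm]
  have h1 : ∑ j ∈ Finset.range D, min (r j) (σ ^ 2 / (s j) ^ 2)
      ≤ σ ^ 2 * ∑ j ∈ Finset.range D, 1 / (s j) ^ 2 := by
    rw [Finset.mul_sum]
    refine Finset.sum_le_sum fun j _ => ?_
    rw [mul_one_div]
    exact min_le_right _ _
  have h2 : (∑' i, min (r (i + D)) (σ ^ 2 / (s (i + D)) ^ 2)) ≤ Q ^ 2 / (a D) ^ 2 := by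
    have hle : ∀ i, min (r (i + D)) (σ ^ 2 / (s (i + D)) ^ 2)
        ≤ ((a (i + D)) ^ 2 * r (i + D)) / (a D) ^ 2 := by
      intro i
      refine le_trans (min_le_left _ _) ?_
      rw [le_div_iff₀ (ha0 D)]
      have := pow_le_pow_left₀ (ha_pos D).le (ha_mono (Nat.le_add_left D i)) 2
      nlinarith [hr0 (i + D)]
    have hs1 : Summable fun i => min (r (i + D)) (σ ^ 2 / (s (i + D)) ^ 2) :=
      (summable_nat_add_iff (f := fun j => min (r j) (σ ^ 2 / (s j) ^ 2)) D).2 hminsumm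
    have hs2' : Summable fun i => (a (i + D)) ^ 2 * r (i + D) :=
      (summable_nat_add_iff (f := fun j => (a j) ^ 2 * r j) D).2 hrsum
    have hs2 : Summable fun i => ((a (i + D)) ^ 2 * r (i + D)) / (a D) ^ 2 :=
      hs2'.div_const _
    refine le_trans (Summable.tsum_le_tsum hle hs1 hs2) ?_
    rw [tsum_div_const, div_le_div_iff₀ (ha0 D) (ha0 D)]
    have htail : (∑' i, (a (i + D)) ^ 2 * r (i + D)) ≤ ∑' j, (a j) ^ 2 * r j := by
      have := Summable.sum_add_tsum_nat_add (f := fun j => (a j) ^ 2 * r j) D hrsum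
      have hnn : 0 ≤ ∑ j ∈ Finset.range D, (a j) ^ 2 * r j :=
        Finset.sum_nonneg fun j _ => mul_nonneg (sq_nonneg _) (hr0 j)
      linarith
    nlinarith [ha0 D]
  linarith

theorem truncated_series_risk_two_sided
    (a : ℕ → ℝ) (ha_pos : ∀ j, 0 < a j) (ha_mono : Monotone a)
    (ha_top : Tendsto a atTop atTop)
    (s : ℕ → ℝ) (hs_pos : ∀ j, 0 < s j) (hs_anti : Antitone s)
    (hs_zero : Tendsto s atTop (nhds 0))
    (Q : ℝ) (hQ : 0 < Q) (σ : ℝ) (hσ : 0 < σ) :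
    sSup {t : ℝ | ∃ r : ℕ → ℝ,
        ((∀ j, 0 ≤ r j) ∧ (Summable fun j => (a j) ^ 2 * r j) ∧
          (∑' j, (a j) ^ 2 * r j) ≤ Q ^ 2) ∧
        t = ∑' j, min (r j) (σ ^ 2 / (s j) ^ 2)}
      ≤ (⨅ D : ℕ, (Q ^ 2 / (a D) ^ 2 + σ ^ 2 * ∑ j ∈ Finset.range D, 1 / (s j) ^ 2)) ∧
    (⨅ D : ℕ, (Q ^ 2 / (a D) ^ 2 + σ ^ 2 * ∑ j ∈ Finset.range D, 1 / (s j) ^ 2))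
      ≤ 2 * sSup {t : ℝ | ∃ r : ℕ → ℝ,
          ((∀ j, 0 ≤ r j) ∧ (Summable fun j => (a j) ^ 2 * r j) ∧
            (∑' j, (a j) ^ 2 * r j) ≤ Q ^ 2) ∧
          t = ∑' j, min (r j) (σ ^ 2 / (s j) ^ 2)} := by
  classical
  set SS : Set ℝ := {t : ℝ | ∃ r : ℕ → ℝ,
      ((∀ j, 0 ≤ r j) ∧ (Summable fun j => (a j) ^ 2 * r j) ∧
        (∑' j, (a j) ^ 2 * r j) ≤ Q ^ 2) ∧
      t = ∑' j, min (r j) (σ ^ 2 / (s j) ^ 2)} with hSS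
  have key : ∀ t ∈ SS, ∀ D : ℕ,
      t ≤ Q ^ 2 / (a D) ^ 2 + σ ^ 2 * ∑ j ∈ Finset.range D, 1 / (s j) ^ 2 := by
    rintro t ⟨r, ⟨hr0, hrsum, hrQ⟩, rfl⟩ D
    exact trunc_risk_le_term a ha_pos ha_mono s Q σ r hr0 hrsum hrQ D
  have hne : SS.Nonempty := by
    refine ⟨0, ⟨fun _ => 0, ⟨fun j => le_rfl, by simpa using summable_zero,
      by simpa using sq_nonneg Q⟩, ?_⟩⟩
    have : ∀ j : ℕ, min ((0:ℝ)) (σ ^ 2 / (s j) ^ 2) = 0 := fun j =>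
      min_eq_left (by positivity)
    simp [this]
  have hbdd : BddAbove SS :=
    ⟨Q ^ 2 / (a 0) ^ 2 + σ ^ 2 * ∑ j ∈ Finset.range 0, 1 / (s j) ^ 2,
      fun t ht => key t ht 0⟩
  have hbddBelow : BddBelow (Set.range fun D : ℕ =>
      Q ^ 2 / (a D) ^ 2 + σ ^ 2 * ∑ j ∈ Finset.range D, 1 / (s j) ^ 2) := by
    refine ⟨0, ?_⟩
    rintro x ⟨D, rfl⟩
    have h1 : 0 ≤ Q ^ 2 / (a D) ^ 2 := by positivity
    have h2 : 0 ≤ σ ^ 2 * ∑ j ∈ Finset.range D, 1 / (s j) ^ 2 := by positivity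
    linarith
  constructor
  · exact csSup_le hne fun t ht => le_ciInf fun D => key t ht D
  -- lower bound part
  · -- find N with a single large term
    have hs2zero : Tendsto (fun n => (s n) ^ 2) atTop (nhds 0) := by
      have := hs_zero.mul hs_zero
      simpa [sq] using this
    have hεpos : (0:ℝ) < σ ^ 2 * (a 0) ^ 2 / Q ^ 2 :=
      div_pos (mul_pos (pow_pos hσ 2) (pow_pos (ha_pos 0) 2)) (pow_pos hQ 2)
    obtain ⟨N, hN⟩ := ((tendsto_order.1 hs2zero).2 _ hεpos).exists
    have hex : ∃ D : ℕ, Q ^ 2 < σ ^ 2 * ∑ j ∈ Finset.range (D + 1), (a j) ^ 2 / (s j) ^ 2 := by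
      refine ⟨N, ?_⟩
      have hsN : (0:ℝ) < (s N) ^ 2 := pow_pos (hs_pos N) 2
      have haN : (a 0) ^ 2 ≤ (a N) ^ 2 :=
        pow_le_pow_left₀ (ha_pos 0).le (ha_mono (Nat.zero_le N)) 2
      have hN' : (s N) ^ 2 * Q ^ 2 < σ ^ 2 * (a 0) ^ 2 :=
        (lt_div_iff₀ (pow_pos hQ 2)).1 hN
      have h1 : Q ^ 2 < σ ^ 2 * ((a N) ^ 2 / (s N) ^ 2) := by
        rw [mul_div_assoc']
        rw [lt_div_iff₀ hsN]
        nlinarith [sq_nonneg σ]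
      refine lt_of_lt_of_le h1 ?_
      gcongr
      exact Finset.single_le_sum (f := fun j => (a j) ^ 2 / (s j) ^ 2)
        (fun j _ => by positivity) (Finset.self_mem_range_succ N)
    set D := Nat.find hex with hDdef
    have hD1 : Q ^ 2 < σ ^ 2 * ∑ j ∈ Finset.range (D + 1), (a j) ^ 2 / (s j) ^ 2 :=
      Nat.find_spec hex
    have hD2 : σ ^ 2 * ∑ j ∈ Finset.range D, (a j) ^ 2 / (s j) ^ 2 ≤ Q ^ 2 := by
      rcases Nat.eq_zero_or_pos D with h0 | hpos
      · rw [h0]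
        simp
        positivity
      · have hmin := Nat.find_min hex (show D - 1 < D from Nat.sub_lt hpos one_pos)
        push_neg at hmin
        have hd : D - 1 + 1 = D := by omega
        rwa [hd] at hmin
    set F : ℝ := σ ^ 2 * ∑ j ∈ Finset.range D, (a j) ^ 2 / (s j) ^ 2 with hF
    set ρ : ℝ := (Q ^ 2 - F) / (a D) ^ 2 with hρ
    have haD : (0:ℝ) < (a D) ^ 2 := pow_pos (ha_pos D) 2
    have hρ0 : 0 ≤ ρ := div_nonneg (by linarith) haD.le
    set r : ℕ → ℝ := fun j => if j < D then σ ^ 2 / (s j) ^ 2 else if j = D then ρ else 0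
      with hr
    have hr0 : ∀ j, 0 ≤ r j := by
      intro j
      simp only [hr]
      split_ifs
      · positivity
      · exact hρ0
      · exact le_rfl
    have hrz : ∀ j ∉ Finset.range (D + 1), r j = 0 := by
      intro j hj
      rw [Finset.mem_range] at hj
      have h1 : ¬ j < D := by omega
      have h2 : j ≠ D := by omega
      simp [hr, h1, h2]
    have hsum_az : Summable fun j => (a j) ^ 2 * r j :=
      summable_of_ne_finset_zero (s := Finset.range (D + 1))
        (fun j hj => by rw [hrz j hj, mul_zero])
    have hQeq : (a D) ^ 2 * ρ = Q ^ 2 - F := by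
      rw [hρ, mul_div_cancel₀ _ (ne_of_gt haD)]
    have htsum_az : (∑' j, (a j) ^ 2 * r j) = Q ^ 2 := by
      rw [tsum_eq_sum (s := Finset.range (D + 1)) (fun j hj => by rw [hrz j hj, mul_zero])]
      rw [Finset.sum_range_succ]
      have e1 : ∑ j ∈ Finset.range D, (a j) ^ 2 * r j
          = σ ^ 2 * ∑ j ∈ Finset.range D, (a j) ^ 2 / (s j) ^ 2 := by
        rw [Finset.mul_sum]
        refine Finset.sum_congr rfl fun j hj => ?_
        rw [Finset.mem_range] at hj
        simp only [hr, if_pos hj]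
        ring
      have e2 : r D = ρ := by simp [hr]
      rw [e1, e2, ← hF]
      linarith [hQeq]
    have hD1' : Q ^ 2 < F + σ ^ 2 * ((a D) ^ 2 / (s D) ^ 2) := by
      rw [hF]
      rw [Finset.sum_range_succ, mul_add] at hD1
      exact hD1
    have hρlt : ρ ≤ σ ^ 2 / (s D) ^ 2 := by
      rw [hρ, div_le_div_iff₀ haD (pow_pos (hs_pos D) 2)]
      have h' : Q ^ 2 - F < σ ^ 2 * (a D) ^ 2 / (s D) ^ 2 := by
        rw [mul_div_assoc]
        linarith
      have := (lt_div_iff₀ (pow_pos (hs_pos D) 2)).1 h'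
      linarith
    have hmin : ∀ j, min (r j) (σ ^ 2 / (s j) ^ 2) = r j := by
      intro j
      rcases lt_trichotomy j D with h | h | h
      · simp [hr, if_pos h]
      · rw [h]
        have e2 : r D = ρ := by simp [hr]
        rw [e2]
        exact min_eq_left hρlt
      · have h1 : ¬ j < D := by omega
        have h2 : j ≠ D := by omega
        simp only [hr, if_neg h1, if_neg h2]
        exact min_eq_left (by positivity)
    have hJ : (∑' j, min (r j) (σ ^ 2 / (s j) ^ 2))
        = σ ^ 2 * ∑ j ∈ Finset.range D, 1 / (s j) ^ 2 + ρ := by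
      rw [tsum_congr hmin, tsum_eq_sum (s := Finset.range (D + 1)) hrz,
        Finset.sum_range_succ]
      have e1 : ∑ j ∈ Finset.range D, r j
          = σ ^ 2 * ∑ j ∈ Finset.range D, 1 / (s j) ^ 2 := by
        rw [Finset.mul_sum]
        refine Finset.sum_congr rfl fun j hj => ?_
        rw [Finset.mem_range] at hj
        simp only [hr, if_pos hj]
        ring
      have e2 : r D = ρ := by simp [hr]
      rw [e1, e2]
    have hmem : (σ ^ 2 * ∑ j ∈ Finset.range D, 1 / (s j) ^ 2 + ρ) ∈ SS := by
      rw [hSS]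
      exact ⟨r, ⟨hr0, hsum_az, le_of_eq htsum_az⟩, hJ.symm⟩
    have hle_sup : σ ^ 2 * ∑ j ∈ Finset.range D, 1 / (s j) ^ 2 + ρ ≤ sSup SS :=
      le_csSup hbdd hmem
    have hFle : F ≤ (a D) ^ 2 * (σ ^ 2 * ∑ j ∈ Finset.range D, 1 / (s j) ^ 2) := by
      have hterm : ∀ j ∈ Finset.range D,
          σ ^ 2 * ((a j) ^ 2 / (s j) ^ 2) ≤ (a D) ^ 2 * (σ ^ 2 * (1 / (s j) ^ 2)) := by
        intro j hj
        rw [Finset.mem_range] at hj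
        have haj : (a j) ^ 2 ≤ (a D) ^ 2 :=
          pow_le_pow_left₀ (ha_pos j).le (ha_mono hj.le) 2
        have hsj : (0:ℝ) < (s j) ^ 2 := pow_pos (hs_pos j) 2
        rw [mul_one_div, mul_div_assoc', mul_div_assoc', div_le_div_iff₀ hsj hsj]
        nlinarith [sq_nonneg σ, mul_le_mul_of_nonneg_left haj (sq_nonneg σ)]
      calc F = ∑ j ∈ Finset.range D, σ ^ 2 * ((a j) ^ 2 / (s j) ^ 2) := by
              rw [hF, Finset.mul_sum]
        _ ≤ ∑ j ∈ Finset.range D, (a D) ^ 2 * (σ ^ 2 * (1 / (s j) ^ 2)) :=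
              Finset.sum_le_sum hterm
        _ = (a D) ^ 2 * (σ ^ 2 * ∑ j ∈ Finset.range D, 1 / (s j) ^ 2) := by
              rw [Finset.mul_sum, Finset.mul_sum]
    have hTD : Q ^ 2 / (a D) ^ 2 + σ ^ 2 * ∑ j ∈ Finset.range D, 1 / (s j) ^ 2
        ≤ 2 * (σ ^ 2 * ∑ j ∈ Finset.range D, 1 / (s j) ^ 2 + ρ) := by
      have hQdiv : Q ^ 2 / (a D) ^ 2 ≤ σ ^ 2 * ∑ j ∈ Finset.range D, 1 / (s j) ^ 2 + ρ := by
        rw [div_le_iff₀ haD]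
        nlinarith [hQeq, hFle]
      linarith
    have hinf_le : (⨅ D : ℕ, (Q ^ 2 / (a D) ^ 2 + σ ^ 2 * ∑ j ∈ Finset.range D, 1 / (s j) ^ 2))
        ≤ Q ^ 2 / (a D) ^ 2 + σ ^ 2 * ∑ j ∈ Finset.range D, 1 / (s j) ^ 2 :=
      ciInf_le hbddBelow D
    linarith
end

section
/- Let φ : [0, ∞) → [0, ∞) be a continuous nondecreasing function with φ(0) = 0, and let (s_j)_{j≥1} be a positive nonincreasing sequence with s_j → 0 and φ(s_j²) > 0 for all j. Let σ > 0 and define the source-type squared ellipsoid R_φ := {r : ℕ≥1 → ℝ : r_j ≥ 0 for all j and ∑_{j=1}^∞ r_j/φ(s_j²)² ≤ 1}. Then sup_{r ∈ R_φ} ∑_{j=1}^∞ min(r_j, σ²/s_j²) ≤ inf_{D ≥ 0} ( φ(s_{D+1}²)² + σ² ∑_{j=1}^D 1/s_j² ) ≤ 2 · sup_{r ∈ R_φ} ∑_{j=1}^∞ min(r_j, σ²/s_j²). -/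
open Filter

/- Indexing convention: coordinates are indexed by `j : ℕ` (index `j` representing
coordinate `j+1` of the paper).  So `s_{D+1}` becomes `s D` and `∑_{j=1}^D 1/s_j²`
becomes `∑ j ∈ Finset.range D, 1/(s j)^2`.  The source-type squared ellipsoid is
`R_φ = {r | (∀ j, 0 ≤ r j) ∧ ∑_j r_j/φ(s_j²)² ≤ 1}` (with the summability of the
weighted series as part of membership), and the function `φ : [0,∞) → [0,∞)` is
modelled as `φ : ℝ → ℝ` which is continuous, nondecreasing and nonnegative on
`[0,∞)` with `φ 0 = 0`. -/

private lemma source_key (b w : ℕ → ℝ)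
    (hb_pos : ∀ j, 0 < b j) (hw_pos : ∀ j, 0 < w j)
    (hw_anti : Antitone w)
    (hw_lim : Tendsto w atTop (nhds 0)) :
    sSup {t : ℝ | ∃ r : ℕ → ℝ,
        ((∀ j, 0 ≤ r j) ∧ (Summable fun j => r j / w j) ∧ (∑' j, r j / w j) ≤ 1) ∧
        t = ∑' j, min (r j) (b j)}
      ≤ (⨅ D : ℕ, (w D + ∑ j ∈ Finset.range D, b j)) ∧
    (⨅ D : ℕ, (w D + ∑ j ∈ Finset.range D, b j))
      ≤ 2 * sSup {t : ℝ | ∃ r : ℕ → ℝ,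
        ((∀ j, 0 ≤ r j) ∧ (Summable fun j => r j / w j) ∧ (∑' j, r j / w j) ≤ 1) ∧
        t = ∑' j, min (r j) (b j)} := by
  classical
  set T := {t : ℝ | ∃ r : ℕ → ℝ,
        ((∀ j, 0 ≤ r j) ∧ (Summable fun j => r j / w j) ∧ (∑' j, r j / w j) ≤ 1) ∧
        t = ∑' j, min (r j) (b j)} with hT
  -- upper bound for every element and every D
  have hA : ∀ t ∈ T, ∀ D : ℕ, t ≤ w D + ∑ j ∈ Finset.range D, b j := by
    intro t ht D
    rw [hT] at ht
    obtain ⟨r, ⟨hr0, hrsum, hrle⟩, rfl⟩ := ht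
    have hind : Summable (fun j => if j < D then b j else 0) :=
      summable_of_ne_finset_zero (s := Finset.range D) (fun j hj => by
        rw [if_neg]; simpa using hj)
    have hgsum : Summable (fun j => (if j < D then b j else 0) + w D * (r j / w j)) :=
      hind.add (hrsum.mul_left _)
    have hfg : ∀ j, min (r j) (b j) ≤ (if j < D then b j else 0) + w D * (r j / w j) := by
      intro j
      by_cases hj : j < D
      · have h2 : (0:ℝ) ≤ w D * (r j / w j) :=
          mul_nonneg (hw_pos D).le (div_nonneg (hr0 j) (hw_pos j).le)
        rw [if_pos hj]
        have := min_le_right (r j) (b j)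
        linarith
      · have hD : D ≤ j := Nat.le_of_not_lt hj
        rw [if_neg hj, zero_add]
        calc min (r j) (b j) ≤ r j := min_le_left _ _
          _ = r j / w j * w j := (div_mul_cancel₀ _ (hw_pos j).ne').symm
          _ ≤ r j / w j * w D :=
              mul_le_mul_of_nonneg_left (hw_anti hD) (div_nonneg (hr0 j) (hw_pos j).le)
          _ = w D * (r j / w j) := mul_comm _ _
    have hfnn : ∀ j, 0 ≤ min (r j) (b j) := fun j => le_min (hr0 j) (hb_pos j).le
    have hfsum : Summable (fun j => min (r j) (b j)) :=
      Summable.of_nonneg_of_le hfnn hfg hgsum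
    have h1 : ∑' j, min (r j) (b j)
        ≤ ∑' j, ((if j < D then b j else 0) + w D * (r j / w j)) :=
      Summable.tsum_le_tsum hfg hfsum hgsum
    have h2 : ∑' j, ((if j < D then b j else 0) + w D * (r j / w j))
        = (∑ j ∈ Finset.range D, b j) + w D * ∑' j, r j / w j := by
      rw [Summable.tsum_add hind (hrsum.mul_left _), tsum_mul_left]
      congr 1
      rw [tsum_eq_sum (s := Finset.range D) (fun j hj => by rw [if_neg]; simpa using hj)]
      apply Finset.sum_congr rfl
      intro j hj
      rw [if_pos (Finset.mem_range.mp hj)]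
    have h3 : w D * ∑' j, r j / w j ≤ w D * 1 :=
      mul_le_mul_of_nonneg_left hrle (hw_pos D).le
    calc ∑' j, min (r j) (b j)
        ≤ (∑ j ∈ Finset.range D, b j) + w D * ∑' j, r j / w j := by rw [← h2]; exact h1
      _ ≤ (∑ j ∈ Finset.range D, b j) + w D * 1 := by linarith
      _ = w D + ∑ j ∈ Finset.range D, b j := by ring
  have hT0 : (0:ℝ) ∈ T := by
    rw [hT]
    refine ⟨fun _ => 0, ⟨fun j => le_refl 0, by simpa using summable_zero, by simp⟩, ?_⟩
    have h : ∀ j : ℕ, min ((fun _ => (0:ℝ)) j) (b j) = 0 :=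
      fun j => min_eq_left (hb_pos j).le
    rw [tsum_congr h, tsum_zero]
  have hbdd : BddAbove T := ⟨w 0 + ∑ j ∈ Finset.range 0, b j, fun t ht => hA t ht 0⟩
  set S := sSup T with hS
  have hS0 : (0:ℝ) ≤ S := le_csSup hbdd hT0
  have hSpos : 0 < S := by
    have hzero : ∀ j ∉ ({0} : Finset ℕ),
        (if j = 0 then min (w 0) (b 0) else 0) = 0 := by
      intro j hj
      rw [if_neg (by simpa using hj)]
    have hmem : min (w 0) (b 0) ∈ T := by
      rw [hT]
      refine ⟨fun j => if j = 0 then min (w 0) (b 0) else 0, ⟨?_, ?_, ?_⟩, ?_⟩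
      · intro j
        beta_reduce
        by_cases hj : j = 0
        · rw [if_pos hj]; exact le_min (hw_pos 0).le (hb_pos 0).le
        · rw [if_neg hj]
      · exact summable_of_ne_finset_zero (s := ({0} : Finset ℕ)) (fun j hj => by
          beta_reduce; rw [hzero j hj, zero_div])
      · rw [tsum_eq_sum (s := ({0} : Finset ℕ)) (fun j hj => by
          beta_reduce; rw [hzero j hj, zero_div])]
        rw [Finset.sum_singleton]
        beta_reduce
        rw [if_pos rfl]
        rw [div_le_one (hw_pos 0)]
        exact min_le_left _ _
      · rw [tsum_eq_sum (s := ({0} : Finset ℕ)) (fun j hj => by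
          beta_reduce; rw [hzero j hj]; exact min_eq_left (hb_pos j).le)]
        rw [Finset.sum_singleton]
        beta_reduce
        rw [if_pos rfl]
        exact (min_eq_left (min_le_right (w 0) (b 0))).symm
    exact lt_of_lt_of_le (lt_min (hw_pos 0) (hb_pos 0)) (le_csSup hbdd hmem)
  have hex : ∃ D, w D ≤ S := by
    obtain ⟨D, hD⟩ := (hw_lim.eventually (Iio_mem_nhds hSpos)).exists
    exact ⟨D, (Set.mem_Iio.mp hD).le⟩
  set Dh := Nat.find hex with hDhdef
  have hDh : w Dh ≤ S := Nat.find_spec hex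
  have hDmin : ∀ j < Dh, S < w j := fun j hj => lt_of_not_ge (Nat.find_min hex hj)
  set B := ∑ j ∈ Finset.range Dh, b j with hB
  have hBS : B ≤ S := by
    by_contra hcon
    push_neg at hcon
    have hD1 : 0 < Dh := by
      rcases Nat.eq_zero_or_pos Dh with h | h
      · exfalso
        rw [hB, h] at hcon
        simp at hcon
        linarith
      · exact h
    have hne : (Finset.range Dh).Nonempty := by
      rw [Finset.nonempty_range_iff]; omega
    set q := ∑ j ∈ Finset.range Dh, b j / w j with hq
    have hqpos : 0 < q :=
      Finset.sum_pos (fun j _ => div_pos (hb_pos j) (hw_pos j)) hne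
    have hqlt : q * S < B := by
      have h1 : q < ∑ j ∈ Finset.range Dh, b j / S := by
        apply Finset.sum_lt_sum_of_nonempty hne
        intro j hj
        exact div_lt_div_of_pos_left (hb_pos j) hSpos (hDmin j (Finset.mem_range.mp hj))
      have h2 : ∑ j ∈ Finset.range Dh, b j / S = B / S := by
        rw [hB, Finset.sum_div]
      rw [h2] at h1
      calc q * S < B / S * S := mul_lt_mul_of_pos_right h1 hSpos
        _ = B := div_mul_cancel₀ _ hSpos.ne'
    set c := min 1 q⁻¹ with hc
    have hc_pos : 0 < c := lt_min one_pos (inv_pos.mpr hqpos)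
    have hc1 : c ≤ 1 := min_le_left _ _
    have hcq : c * q ≤ 1 := by
      calc c * q ≤ q⁻¹ * q := mul_le_mul_of_nonneg_right (min_le_right _ _) hqpos.le
        _ = 1 := inv_mul_cancel₀ hqpos.ne'
    have hcB : S < c * B := by
      rcases min_cases (1:ℝ) q⁻¹ with ⟨h1, _⟩ | ⟨h1, _⟩ <;> rw [hc, h1]
      · simpa using hcon
      · rw [inv_mul_eq_div, lt_div_iff₀ hqpos]
        linarith
    have hzero : ∀ j ∉ Finset.range Dh,
        (if j < Dh then c * b j else 0) = 0 := by
      intro j hj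
      rw [if_neg (by simpa using hj)]
    have hmem : c * B ∈ T := by
      rw [hT]
      refine ⟨fun j => if j < Dh then c * b j else 0, ⟨?_, ?_, ?_⟩, ?_⟩
      · intro j
        beta_reduce
        by_cases hj : j < Dh
        · rw [if_pos hj]; exact mul_nonneg hc_pos.le (hb_pos _).le
        · rw [if_neg hj]
      · exact summable_of_ne_finset_zero (s := Finset.range Dh) (fun j hj => by
          beta_reduce; rw [hzero j hj, zero_div])
      · rw [tsum_eq_sum (s := Finset.range Dh) (fun j hj => by
          beta_reduce; rw [hzero j hj, zero_div])]
        beta_reduce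
        calc ∑ j ∈ Finset.range Dh, (if j < Dh then c * b j else 0) / w j
            = ∑ j ∈ Finset.range Dh, c * (b j / w j) := by
              apply Finset.sum_congr rfl
              intro j hj
              rw [if_pos (Finset.mem_range.mp hj), mul_div_assoc]
          _ = c * q := by rw [hq, Finset.mul_sum]
          _ ≤ 1 := hcq
      · rw [tsum_eq_sum (s := Finset.range Dh) (fun j hj => by
          beta_reduce; rw [hzero j hj]; exact min_eq_left (hb_pos j).le)]
        rw [hB, Finset.mul_sum]
        apply Finset.sum_congr rfl
        intro j hj
        beta_reduce
        rw [if_pos (Finset.mem_range.mp hj)]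
        exact (min_eq_left (mul_le_of_le_one_left (hb_pos j).le hc1)).symm
    exact absurd (le_csSup hbdd hmem) (not_le.mpr hcB)
  have hInn : ∀ D : ℕ, (0:ℝ) ≤ w D + ∑ j ∈ Finset.range D, b j := by
    intro D
    have h1 : (0:ℝ) ≤ ∑ j ∈ Finset.range D, b j :=
      Finset.sum_nonneg fun j _ => (hb_pos j).le
    linarith [(hw_pos D).le]
  have hbddBelow : BddBelow (Set.range fun D : ℕ => w D + ∑ j ∈ Finset.range D, b j) := by
    refine ⟨0, ?_⟩
    rintro x ⟨D, rfl⟩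
    exact hInn D
  constructor
  · refine Real.sSup_le (fun t ht => le_ciInf fun D => hA t ht D) ?_
    exact le_ciInf hInn
  · calc (⨅ D : ℕ, (w D + ∑ j ∈ Finset.range D, b j)) ≤ w Dh + B :=
        ciInf_le hbddBelow Dh
      _ ≤ S + S := add_le_add hDh hBS
      _ = 2 * S := by ring

/-- for a general source condition given by an index function `φ`,
`sup_{r ∈ R_φ} ∑_j min(r_j, σ²/s_j²) ≤ inf_{D ≥ 0} ( φ(s_{D+1}²)² + σ² ∑_{j=1}^D 1/s_j² )
  ≤ 2 sup_{r ∈ R_φ} ∑_j min(r_j, σ²/s_j²)`. -/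
theorem source_set_risk_two_sided
    (φ : ℝ → ℝ)
    (hφ_cont : ContinuousOn φ (Set.Ici 0))
    (hφ_mono : MonotoneOn φ (Set.Ici 0))
    (hφ_nonneg : ∀ x ∈ Set.Ici (0 : ℝ), 0 ≤ φ x)
    (hφ0 : φ 0 = 0)
    (s : ℕ → ℝ) (hs_pos : ∀ j, 0 < s j) (hs_anti : Antitone s)
    (hs_zero : Tendsto s atTop (nhds 0))
    (hφs_pos : ∀ j, 0 < φ ((s j) ^ 2))
    (σ : ℝ) (hσ : 0 < σ) :
    sSup {t : ℝ | ∃ r : ℕ → ℝ,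
        ((∀ j, 0 ≤ r j) ∧ (Summable fun j => r j / (φ ((s j) ^ 2)) ^ 2) ∧
          (∑' j, r j / (φ ((s j) ^ 2)) ^ 2) ≤ 1) ∧
        t = ∑' j, min (r j) (σ ^ 2 / (s j) ^ 2)}
      ≤ (⨅ D : ℕ, ((φ ((s D) ^ 2)) ^ 2 + σ ^ 2 * ∑ j ∈ Finset.range D, 1 / (s j) ^ 2)) ∧
    (⨅ D : ℕ, ((φ ((s D) ^ 2)) ^ 2 + σ ^ 2 * ∑ j ∈ Finset.range D, 1 / (s j) ^ 2))
      ≤ 2 * sSup {t : ℝ | ∃ r : ℕ → ℝ,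
          ((∀ j, 0 ≤ r j) ∧ (Summable fun j => r j / (φ ((s j) ^ 2)) ^ 2) ∧
            (∑' j, r j / (φ ((s j) ^ 2)) ^ 2) ≤ 1) ∧
          t = ∑' j, min (r j) (σ ^ 2 / (s j) ^ 2)} := by
  have hs2_nonneg : ∀ j, (0:ℝ) ≤ (s j) ^ 2 := fun j => sq_nonneg _
  have hb_pos : ∀ j, 0 < σ ^ 2 / (s j) ^ 2 :=
    fun j => div_pos (pow_pos hσ 2) (pow_pos (hs_pos j) 2)
  have hw_pos : ∀ j, 0 < (φ ((s j) ^ 2)) ^ 2 := fun j => pow_pos (hφs_pos j) 2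
  have hw_anti : Antitone fun j => (φ ((s j) ^ 2)) ^ 2 := by
    intro i j hij
    have h2 : (s j) ^ 2 ≤ (s i) ^ 2 := pow_le_pow_left₀ (hs_pos j).le (hs_anti hij) 2
    have h3 : φ ((s j) ^ 2) ≤ φ ((s i) ^ 2) := hφ_mono (hs2_nonneg j) (hs2_nonneg i) h2
    exact pow_le_pow_left₀ (hφs_pos j).le h3 2
  have hw_lim : Tendsto (fun j => (φ ((s j) ^ 2)) ^ 2) atTop (nhds 0) := by
    have hsq : Tendsto (fun j => (s j) ^ 2) atTop (nhds 0) := by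
      have := hs_zero.pow 2
      simpa using this
    have hsq' : Tendsto (fun j => (s j) ^ 2) atTop (nhdsWithin 0 (Set.Ici 0)) :=
      tendsto_nhdsWithin_of_tendsto_nhds_of_eventually_within _ hsq
        (Filter.Eventually.of_forall fun j => hs2_nonneg j)
    have hφc : Tendsto φ (nhdsWithin 0 (Set.Ici 0)) (nhds 0) := by
      have h := hφ_cont 0 Set.self_mem_Ici
      rw [ContinuousWithinAt, hφ0] at h
      exact h
    have h1 : Tendsto (fun j => φ ((s j) ^ 2)) atTop (nhds 0) := hφc.comp hsq'
    have := h1.pow 2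
    simpa using this
  have h := source_key (fun j => σ ^ 2 / (s j) ^ 2) (fun j => (φ ((s j) ^ 2)) ^ 2)
    hb_pos hw_pos hw_anti hw_lim
  have hsum_eq : ∀ D : ℕ, σ ^ 2 * ∑ j ∈ Finset.range D, 1 / (s j) ^ 2
      = ∑ j ∈ Finset.range D, σ ^ 2 / (s j) ^ 2 := by
    intro D
    rw [Finset.mul_sum]
    apply Finset.sum_congr rfl
    intro j _
    rw [mul_one_div]
  simp only [hsum_eq]
  exact h
end

section
/- Let p > 0, κ > 0 and Q > 0, and set a_j = j^κ and s_j = j^{−p} for j ≥ 1. Then there exist constants 0 < c ≤ C and σ₀ > 0 such that for all σ ∈ (0, σ₀): c · σ^{2κ/(κ + p + 1/2)} ≤ inf_{D ≥ 0} ( Q²/(D+1)^{2κ} + σ² ∑_{j=1}^D j^{2p} ) ≤ C · σ^{2κ/(κ + p + 1/2)}. -/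
/- Indexing convention: with `D : ℕ` playing the role of the truncation level
`D ≥ 0`, the term `Q²/(D+1)^{2κ}` is `Q ^ 2 / ((D : ℝ) + 1) ^ (2 * κ)` and
`∑_{j=1}^D j^{2p}` is `∑ j in Finset.range D, ((j : ℝ) + 1) ^ (2 * p)`
(real powers are `Real.rpow`). -/

lemma sum_lower (p : ℝ) (hp : 0 < p) (D : ℕ) (hD : 1 ≤ D) :
    ((D:ℝ)+1) ^ (2*p+1) / (4 * (2:ℝ) ^ (2*p))
      ≤ ∑ j ∈ Finset.range D, ((j : ℝ) + 1) ^ (2 * p) := by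
  have h2p : (0:ℝ) ≤ 2*p := by positivity
  have hsub : Finset.Ico (D/2) D ⊆ Finset.range D := by
    rw [Finset.range_eq_Ico]
    exact Finset.Ico_subset_Ico (Nat.zero_le _) le_rfl
  have hstep1 : ∑ j ∈ Finset.Ico (D/2) D, ((j : ℝ) + 1) ^ (2 * p)
      ≤ ∑ j ∈ Finset.range D, ((j : ℝ) + 1) ^ (2 * p) := by
    apply Finset.sum_le_sum_of_subset_of_nonneg hsub
    intro i _ _
    positivity
  have hterm : ∀ j ∈ Finset.Ico (D/2) D,
      (((D:ℝ)+1)/2) ^ (2*p) ≤ ((j : ℝ) + 1) ^ (2 * p) := by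
    intro j hj
    rw [Finset.mem_Ico] at hj
    apply Real.rpow_le_rpow (by positivity) _ h2p
    have h1 : ((D:ℝ)+1)/2 ≤ (D/2 : ℕ) + 1 := by
      have h : D ≤ 2 * (D/2) + 1 := by omega
      have h' : (D:ℝ) ≤ 2 * (D/2 : ℕ) + 1 := by exact_mod_cast h
      linarith
    have h2 : ((D/2 : ℕ) : ℝ) ≤ j := Nat.cast_le.2 hj.1
    linarith
  have hcard : (Finset.Ico (D/2) D).card = D - D/2 := Nat.card_Ico _ _
  have hstep2 : ((D - D/2 : ℕ) : ℝ) * (((D:ℝ)+1)/2) ^ (2*p)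
      ≤ ∑ j ∈ Finset.Ico (D/2) D, ((j : ℝ) + 1) ^ (2 * p) := by
    have := Finset.card_nsmul_le_sum (Finset.Ico (D/2) D)
      (fun j => ((j : ℝ) + 1) ^ (2*p)) ((((D:ℝ)+1)/2) ^ (2*p)) hterm
    rw [hcard] at this
    simpa [nsmul_eq_mul] using this
  have hhalf : ((D:ℝ)+1)/4 ≤ ((D - D/2 : ℕ) : ℝ) := by
    have h1 : ((D - D/2 : ℕ) : ℝ) = (D:ℝ) - (D/2 : ℕ) := by
      have := Nat.div_le_self D 2
      push_cast [Nat.cast_sub this]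
      ring
    have h2 : ((D/2 : ℕ) : ℝ) ≤ (D:ℝ)/2 := Nat.cast_div_le
    have h3 : (1:ℝ) ≤ D := by exact_mod_cast hD
    rw [h1]; linarith
  have hfinal : ((D:ℝ)+1) ^ (2*p+1) / (4 * (2:ℝ) ^ (2*p))
      = ((D:ℝ)+1)/4 * (((D:ℝ)+1)/2) ^ (2*p) := by
    rw [Real.rpow_add (by positivity), Real.rpow_one,
      Real.div_rpow (by positivity) (by norm_num)]
    have h2 : (0:ℝ) < (2:ℝ) ^ (2*p) := by positivity
    field_simp
  have hmul : ((D:ℝ)+1)/4 * (((D:ℝ)+1)/2) ^ (2*p)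
      ≤ ((D - D/2 : ℕ) : ℝ) * (((D:ℝ)+1)/2) ^ (2*p) :=
    mul_le_mul_of_nonneg_right hhalf (by positivity)
  linarith


/-- for moderate smoothness `a_j = j^κ` and a moderately ill-posed
operator `s_j = j^{−p}`, the best truncated-series squared risk behaves like
`σ^{2κ/(κ+p+1/2)}` as `σ → 0`, up to constants. -/
theorem rate_moderate_moderate
    (p κ Q : ℝ) (hp : 0 < p) (hκ : 0 < κ) (hQ : 0 < Q) :
    ∃ c C σ₀ : ℝ, 0 < c ∧ c ≤ C ∧ 0 < σ₀ ∧
      ∀ σ : ℝ, 0 < σ → σ < σ₀ →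
        c * σ ^ (2 * κ / (κ + p + 1 / 2))
          ≤ (⨅ D : ℕ, (Q ^ 2 / ((D : ℝ) + 1) ^ (2 * κ)
              + σ ^ 2 * ∑ j ∈ Finset.range D, ((j : ℝ) + 1) ^ (2 * p))) ∧
        (⨅ D : ℕ, (Q ^ 2 / ((D : ℝ) + 1) ^ (2 * κ)
              + σ ^ 2 * ∑ j ∈ Finset.range D, ((j : ℝ) + 1) ^ (2 * p)))
          ≤ C * σ ^ (2 * κ / (κ + p + 1 / 2)) := by
  set s : ℝ := 2*κ + 2*p + 1 with hs
  have hs0 : (0:ℝ) < s := by positivity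
  set r : ℝ := 2 * κ / (κ + p + 1/2) with hr
  have hrs : r = 4*κ/s := by
    rw [hr, hs]; rw [div_eq_div_iff (by linarith) (by linarith)]; ring
  have hc2 : (0:ℝ) < (4 * (2:ℝ) ^ (2*p))⁻¹ := by positivity
  refine ⟨min (Q^2) ((4 * (2:ℝ) ^ (2*p))⁻¹), Q^2 + 1, 1, ?_, ?_, one_pos, ?_⟩
  · exact lt_min (by positivity) hc2
  · exact le_trans (min_le_left _ _) (by linarith)
  intro σ hσ hσ1
  set T : ℝ := σ ^ (-(2/s)) with hT
  have hT0 : 0 < T := Real.rpow_pos_of_pos hσ _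
  have hT1 : 1 < T := by
    rw [hT]
    apply Real.one_lt_rpow_iff_of_pos hσ |>.2
    right
    constructor
    · exact hσ1
    · have : 0 < 2/s := by positivity
      linarith
  -- key rpow identities
  have hT2κ : T ^ (2*κ) = σ ^ (-r) := by
    rw [hT, ← Real.rpow_mul hσ.le]
    congr 1
    rw [hrs]
    ring
  have hT2p1 : σ ^ 2 * T ^ (2*p+1) = σ ^ r := by
    have h2 : σ ^ 2 = σ ^ ((2:ℕ):ℝ) := (Real.rpow_natCast σ 2).symm
    rw [h2, hT, ← Real.rpow_mul hσ.le, ← Real.rpow_add hσ]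
    congr 1
    push_cast
    rw [hrs, hs]
    field_simp
    ring
  have hσr : 0 < σ ^ r := Real.rpow_pos_of_pos hσ _
  -- bddBelow
  have hbdd : BddBelow (Set.range fun D : ℕ =>
      Q ^ 2 / ((D : ℝ) + 1) ^ (2 * κ)
        + σ ^ 2 * ∑ j ∈ Finset.range D, ((j : ℝ) + 1) ^ (2 * p)) := by
    refine ⟨0, ?_⟩
    rintro x ⟨D, rfl⟩
    have : (0:ℝ) ≤ ∑ j ∈ Finset.range D, ((j : ℝ) + 1) ^ (2 * p) :=
      Finset.sum_nonneg fun j _ => by positivity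
    positivity
  constructor
  · -- lower bound
    apply le_ciInf
    intro D
    have hsum0 : (0:ℝ) ≤ ∑ j ∈ Finset.range D, ((j : ℝ) + 1) ^ (2 * p) :=
      Finset.sum_nonneg fun j _ => by positivity
    rcases le_or_gt ((D:ℝ)+1) T with hle | hlt
    · -- Q² term dominates
      have h1 : ((D:ℝ)+1) ^ (2*κ) ≤ T ^ (2*κ) :=
        Real.rpow_le_rpow (by positivity) hle (by positivity)
      have h2 : Q^2 / T ^ (2*κ) ≤ Q^2 / ((D:ℝ)+1) ^ (2*κ) :=
        div_le_div_of_nonneg_left (by positivity) (by positivity) h1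
      have h3 : Q^2 / T ^ (2*κ) = Q^2 * σ ^ r := by
        rw [hT2κ, Real.rpow_neg hσ.le]
        field_simp
      calc min (Q^2) ((4 * (2:ℝ) ^ (2*p))⁻¹) * σ ^ r
          ≤ Q^2 * σ ^ r := by
            apply mul_le_mul_of_nonneg_right (min_le_left _ _) hσr.le
        _ = Q^2 / T ^ (2*κ) := h3.symm
        _ ≤ Q^2 / ((D:ℝ)+1) ^ (2*κ) := h2
        _ ≤ _ := le_add_of_nonneg_right (by positivity)
    · -- noise term dominates
      have hD1 : 1 ≤ D := by
        rcases Nat.eq_zero_or_pos D with h0 | h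
        · subst h0; norm_num at hlt; linarith
        · exact h
      have hsum : ((D:ℝ)+1) ^ (2*p+1) / (4 * (2:ℝ) ^ (2*p))
          ≤ ∑ j ∈ Finset.range D, ((j : ℝ) + 1) ^ (2 * p) := sum_lower p hp D hD1
      have hTD : T ^ (2*p+1) ≤ ((D:ℝ)+1) ^ (2*p+1) :=
        Real.rpow_le_rpow hT0.le hlt.le (by positivity)
      calc min (Q^2) ((4 * (2:ℝ) ^ (2*p))⁻¹) * σ ^ r
          ≤ (4 * (2:ℝ) ^ (2*p))⁻¹ * σ ^ r :=
            mul_le_mul_of_nonneg_right (min_le_right _ _) hσr.le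
        _ = σ ^ 2 * (T ^ (2*p+1) / (4 * (2:ℝ) ^ (2*p))) := by
            rw [← hT2p1]; ring
        _ ≤ σ ^ 2 * (((D:ℝ)+1) ^ (2*p+1) / (4 * (2:ℝ) ^ (2*p))) := by
            apply mul_le_mul_of_nonneg_left _ (by positivity)
            exact div_le_div_of_nonneg_right hTD (by positivity)
        _ ≤ σ ^ 2 * ∑ j ∈ Finset.range D, ((j : ℝ) + 1) ^ (2 * p) :=
            mul_le_mul_of_nonneg_left hsum (by positivity)
        _ ≤ _ := le_add_of_nonneg_left (by positivity)
  · -- upper bound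
    set D : ℕ := ⌊T⌋₊ with hD
    have hDT : (D:ℝ) ≤ T := Nat.floor_le hT0.le
    have hTD1 : T ≤ (D:ℝ) + 1 := (Nat.lt_floor_add_one T).le
    have h1 : Q^2 / ((D:ℝ)+1) ^ (2*κ) ≤ Q^2 * σ ^ r := by
      have ha : T ^ (2*κ) ≤ ((D:ℝ)+1) ^ (2*κ) :=
        Real.rpow_le_rpow hT0.le hTD1 (by positivity)
      have hb : Q^2 / ((D:ℝ)+1) ^ (2*κ) ≤ Q^2 / T ^ (2*κ) :=
        div_le_div_of_nonneg_left (by positivity) (by positivity) ha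
      have heq : Q^2 / T ^ (2*κ) = Q^2 * σ ^ r := by
        rw [hT2κ, Real.rpow_neg hσ.le]
        field_simp
      exact hb.trans_eq heq
    have h2 : σ ^ 2 * ∑ j ∈ Finset.range D, ((j : ℝ) + 1) ^ (2 * p) ≤ σ ^ r := by
      have hsum : ∑ j ∈ Finset.range D, ((j : ℝ) + 1) ^ (2 * p)
          ≤ (D:ℝ) * T ^ (2*p) := by
        calc ∑ j ∈ Finset.range D, ((j : ℝ) + 1) ^ (2 * p)
            ≤ ∑ _j ∈ Finset.range D, T ^ (2*p) := by
              apply Finset.sum_le_sum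
              intro j hj
              apply Real.rpow_le_rpow (by positivity) _ (by positivity)
              have : (j:ℝ) + 1 ≤ D := by
                have := Finset.mem_range.1 hj
                exact_mod_cast Nat.succ_le_of_lt this
              linarith
          _ = (D:ℝ) * T ^ (2*p) := by
              rw [Finset.sum_const, Finset.card_range, nsmul_eq_mul]
      have hDT2 : (D:ℝ) * T ^ (2*p) ≤ T ^ (2*p+1) := by
        rw [Real.rpow_add hT0, Real.rpow_one]
        calc (D:ℝ) * T ^ (2*p) ≤ T * T ^ (2*p) :=
              mul_le_mul_of_nonneg_right hDT (by positivity)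
          _ = T ^ (2*p) * T := by ring
      calc σ ^ 2 * ∑ j ∈ Finset.range D, ((j : ℝ) + 1) ^ (2 * p)
          ≤ σ ^ 2 * ((D:ℝ) * T ^ (2*p)) :=
            mul_le_mul_of_nonneg_left hsum (by positivity)
        _ ≤ σ ^ 2 * T ^ (2*p+1) :=
            mul_le_mul_of_nonneg_left hDT2 (by positivity)
        _ = σ ^ r := hT2p1
    calc (⨅ D : ℕ, (Q ^ 2 / ((D : ℝ) + 1) ^ (2 * κ)
              + σ ^ 2 * ∑ j ∈ Finset.range D, ((j : ℝ) + 1) ^ (2 * p)))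
        ≤ Q ^ 2 / ((D : ℝ) + 1) ^ (2 * κ)
              + σ ^ 2 * ∑ j ∈ Finset.range D, ((j : ℝ) + 1) ^ (2 * p) :=
          ciInf_le hbdd D
      _ ≤ Q^2 * σ ^ r + σ ^ r := add_le_add h1 h2
      _ = (Q^2 + 1) * σ ^ r := by ring
end

section
/- Let p > 0, κ > 0 and Q > 0, and set a_j = j^κ and s_j = e^{−pj} for j ≥ 1. Then there exist constants 0 < c ≤ C and σ₀ > 0 such that for all σ ∈ (0, σ₀): c · (log(1/σ))^{−2κ} ≤ inf_{D ≥ 0} ( Q²/(D+1)^{2κ} + σ² ∑_{j=1}^D e^{2pj} ) ≤ C · (log(1/σ))^{−2κ}. -/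
open Real Filter Finset

set_option maxHeartbeats 1000000


/- Indexing convention: with `D : ℕ` playing the role of the truncation level
`D ≥ 0`, the term `Q²/(D+1)^{2κ}` is `Q ^ 2 / ((D : ℝ) + 1) ^ (2 * κ)` and
`∑_{j=1}^D e^{2pj}` is `∑ j in Finset.range D, Real.exp (2 * p * ((j : ℝ) + 1))`
(real powers are `Real.rpow`). -/

/-- for moderate smoothness `a_j = j^κ` and a severely ill-posed
operator `s_j = e^{−pj}`, the best truncated-series squared risk behaves like
`(log(1/σ))^{−2κ}` as `σ → 0`, up to constants. -/
theorem rate_moderate_severe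
    (p κ Q : ℝ) (hp : 0 < p) (hκ : 0 < κ) (hQ : 0 < Q) :
    ∃ c C σ₀ : ℝ, 0 < c ∧ c ≤ C ∧ 0 < σ₀ ∧
      ∀ σ : ℝ, 0 < σ → σ < σ₀ →
        c * (Real.log (1 / σ)) ^ (-(2 * κ))
          ≤ (⨅ D : ℕ, (Q ^ 2 / ((D : ℝ) + 1) ^ (2 * κ)
              + σ ^ 2 * ∑ j ∈ Finset.range D, Real.exp (2 * p * ((j : ℝ) + 1)))) ∧
        (⨅ D : ℕ, (Q ^ 2 / ((D : ℝ) + 1) ^ (2 * κ)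
              + σ ^ 2 * ∑ j ∈ Finset.range D, Real.exp (2 * p * ((j : ℝ) + 1))))
          ≤ C * (Real.log (1 / σ)) ^ (-(2 * κ)) := by
  set A : ℝ := Real.exp (2*p) * (1/(2*p) + 1) with hA
  have hApos : 0 < A := by positivity
  obtain ⟨T₁, hT₁⟩ : ∃ T₁ : ℝ, ∀ L ≥ T₁,
      L ^ (1 + 2*κ) * Real.exp (-1 * L) ≤ A⁻¹ := by
    have h := (tendsto_rpow_mul_exp_neg_mul_atTop_nhds_zero (1 + 2*κ) 1
      one_pos).eventually_le_const (inv_pos.mpr hApos)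
    exact eventually_atTop.mp h
  set T : ℝ := max T₁ (max p 1) with hTdef
  refine ⟨min 1 (Q^2 * (p/2) ^ (2*κ)), Q^2 * (2*p) ^ (2*κ) + 1, Real.exp (-T),
    by positivity, ?_, Real.exp_pos _, ?_⟩
  · calc min 1 (Q^2 * (p/2) ^ (2*κ)) ≤ 1 := min_le_left _ _
      _ ≤ Q^2 * (2*p) ^ (2*κ) + 1 := le_add_of_nonneg_left (by positivity)
  intro σ hσ hσT
  set L : ℝ := Real.log (1/σ) with hLdef
  have hexpL : Real.exp L = 1/σ := Real.exp_log (by positivity)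
  have hLT : T < L := by
    have h1 : Real.exp T < Real.exp L := by
      rw [hexpL]
      have := one_div_lt_one_div_of_lt hσ hσT
      rwa [one_div (Real.exp (-T)), ← Real.exp_neg, neg_neg] at this
    exact Real.exp_lt_exp.mp h1
  have hL1 : 1 ≤ L := le_of_lt (lt_of_le_of_lt (le_trans (le_max_right p 1) (le_max_right _ _)) hLT)
  have hLp : p < L := lt_of_le_of_lt (le_trans (le_max_left p 1) (le_max_right _ _)) hLT
  have hLpos : 0 < L := lt_of_lt_of_le one_pos hL1
  have hσeq : σ = Real.exp (-L) := by
    rw [Real.exp_neg, hexpL, one_div, inv_inv]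
  -- lower bound on every term
  have hlow : ∀ D : ℕ, min 1 (Q^2 * (p/2) ^ (2*κ)) * L ^ (-(2*κ))
      ≤ Q ^ 2 / ((D : ℝ) + 1) ^ (2 * κ)
        + σ ^ 2 * ∑ j ∈ Finset.range D, Real.exp (2 * p * ((j : ℝ) + 1)) := by
    intro D
    have hsum0 : 0 ≤ ∑ j ∈ Finset.range D, Real.exp (2 * p * ((j : ℝ) + 1)) :=
      Finset.sum_nonneg fun _ _ => (Real.exp_pos _).le
    rcases le_or_gt ((D : ℝ)) (L/p) with hD | hD
    · have h1 : (D:ℝ) + 1 ≤ 2*L/p := by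
        have h2 : (1:ℝ) ≤ L/p := (one_le_div hp).mpr hLp.le
        have : 2*L/p = L/p + L/p := by ring
        linarith
      have h2 : ((D:ℝ)+1) ^ (2*κ) ≤ (2*L/p) ^ (2*κ) :=
        Real.rpow_le_rpow (by positivity) h1 (by positivity)
      have h3 : Q^2 / (2*L/p) ^ (2*κ) ≤ Q^2 / ((D:ℝ)+1) ^ (2*κ) :=
        div_le_div_of_nonneg_left (by positivity) (by positivity) h2
      have h4 : (2*L/p) ^ (2*κ) = (2/p) ^ (2*κ) * L ^ (2*κ) := by
        rw [← Real.mul_rpow (by positivity) hLpos.le]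
        congr 1; ring
      have h5 : Q^2 * (p/2) ^ (2*κ) * L ^ (-(2*κ)) = Q^2 / (2*L/p) ^ (2*κ) := by
        rw [h4, Real.rpow_neg hLpos.le]
        have : (p/2 : ℝ) = (2/p)⁻¹ := by field_simp
        rw [this, Real.inv_rpow (by positivity)]
        field_simp
      calc min 1 (Q^2 * (p/2) ^ (2*κ)) * L ^ (-(2*κ))
          ≤ Q^2 * (p/2) ^ (2*κ) * L ^ (-(2*κ)) :=
            mul_le_mul_of_nonneg_right (min_le_right _ _) (Real.rpow_nonneg hLpos.le _)
        _ = Q^2 / (2*L/p) ^ (2*κ) := h5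
        _ ≤ Q^2 / ((D:ℝ)+1) ^ (2*κ) := h3
        _ ≤ _ := le_add_of_nonneg_right (mul_nonneg (sq_nonneg σ) hsum0)
    · have hD1 : 1 ≤ D := by
        by_contra h
        push_neg at h
        interval_cases D
        · simp only [Nat.cast_zero] at hD
          exact absurd hD (not_lt.mpr (by positivity))
      have hmem : D - 1 ∈ Finset.range D := Finset.mem_range.mpr (by omega)
      have hsum : Real.exp (2 * p * (((D-1 : ℕ) : ℝ) + 1))
          ≤ ∑ j ∈ Finset.range D, Real.exp (2 * p * ((j : ℝ) + 1)) :=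
        Finset.single_le_sum (f := fun j : ℕ => Real.exp (2 * p * ((j : ℝ) + 1)))
          (fun i _ => (Real.exp_pos _).le) hmem
      have hcast : (((D-1 : ℕ) : ℝ) + 1) = (D : ℝ) := by
        push_cast [hD1]; ring
      rw [hcast] at hsum
      have h5 : Real.exp (2*L) ≤ Real.exp (2 * p * (D:ℝ)) := by
        apply Real.exp_le_exp.mpr
        have : L < p * (D:ℝ) := by
          rw [div_lt_iff₀ hp] at hD; linarith [hD]
        nlinarith
      have hσ2 : σ^2 = Real.exp (-(2*L)) := by
        rw [hσeq, sq, ← Real.exp_add]; ring_nf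
      have h6 : 1 ≤ σ^2 * ∑ j ∈ Finset.range D, Real.exp (2 * p * ((j : ℝ) + 1)) := by
        calc (1:ℝ) = Real.exp (-(2*L)) * Real.exp (2*L) := by
              rw [← Real.exp_add]; simp
          _ ≤ σ^2 * ∑ j ∈ Finset.range D, Real.exp (2 * p * ((j : ℝ) + 1)) := by
              rw [hσ2]
              exact mul_le_mul_of_nonneg_left (le_trans h5 hsum) (Real.exp_pos _).le
      calc min 1 (Q^2 * (p/2) ^ (2*κ)) * L ^ (-(2*κ))
          ≤ 1 * 1 := mul_le_mul (min_le_left _ _)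
            (Real.rpow_le_one_of_one_le_of_nonpos hL1 (by nlinarith))
            (Real.rpow_nonneg hLpos.le _) zero_le_one
        _ = 1 := one_mul 1
        _ ≤ σ^2 * ∑ j ∈ Finset.range D, Real.exp (2 * p * ((j : ℝ) + 1)) := h6
        _ ≤ _ := le_add_of_nonneg_left (by positivity)
  constructor
  · exact le_ciInf hlow
  -- upper bound
  · have hbdd : BddBelow (Set.range fun D : ℕ => Q ^ 2 / ((D : ℝ) + 1) ^ (2 * κ)
        + σ ^ 2 * ∑ j ∈ Finset.range D, Real.exp (2 * p * ((j : ℝ) + 1))) := by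
      refine ⟨0, Set.forall_mem_range.mpr fun D => ?_⟩
      have hsum0 : 0 ≤ ∑ j ∈ Finset.range D, Real.exp (2 * p * ((j : ℝ) + 1)) :=
        Finset.sum_nonneg fun _ _ => (Real.exp_pos _).le
      exact add_nonneg (by positivity) (mul_nonneg (sq_nonneg σ) hsum0)
    set D₀ : ℕ := ⌈L/(2*p)⌉₊ with hD₀def
    have hD₀ : L/(2*p) ≤ (D₀ : ℝ) := Nat.le_ceil _
    have hD₀' : (D₀ : ℝ) < L/(2*p) + 1 := Nat.ceil_lt_add_one (by positivity)
    refine le_trans (ciInf_le hbdd D₀) ?_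
    -- first term bound
    have hLκ : 0 < L ^ (2*κ) := Real.rpow_pos_of_pos hLpos _
    have hterm1 : Q ^ 2 / ((D₀ : ℝ) + 1) ^ (2 * κ) ≤ Q^2 * (2*p) ^ (2*κ) * L ^ (-(2*κ)) := by
      have h1 : L/(2*p) ≤ (D₀:ℝ) + 1 := le_trans hD₀ (by linarith)
      have h2 : (L/(2*p)) ^ (2*κ) ≤ ((D₀:ℝ)+1) ^ (2*κ) :=
        Real.rpow_le_rpow (by positivity) h1 (by positivity)
      have h3 : Q^2 / ((D₀:ℝ)+1) ^ (2*κ) ≤ Q^2 / (L/(2*p)) ^ (2*κ) :=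
        div_le_div_of_nonneg_left (by positivity) (by positivity) h2
      have h4 : (L/(2*p)) ^ (2*κ) = L ^ (2*κ) / (2*p) ^ (2*κ) :=
        Real.div_rpow hLpos.le (le_of_lt (by positivity : (0:ℝ) < 2*p)) (2*κ)
      have h5 : Q^2 / (L/(2*p)) ^ (2*κ) = Q^2 * (2*p) ^ (2*κ) * L ^ (-(2*κ)) := by
        rw [h4, Real.rpow_neg hLpos.le]
        field_simp
      rw [← h5]; exact h3
    -- second term bound
    have hkey : A * (L * Real.exp (-L)) ≤ L ^ (-(2*κ)) := by
      have h := hT₁ L (le_of_lt (lt_of_le_of_lt (le_max_left _ _) hLT))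
      have h1 : L ^ (1 + 2*κ) = L * L ^ (2*κ) := by
        rw [Real.rpow_add hLpos, Real.rpow_one]
      rw [h1] at h
      have h2 : A * (L * Real.exp (-L)) * L ^ (2*κ) ≤ 1 := by
        have h3 := mul_le_mul_of_nonneg_left h hApos.le
        calc A * (L * Real.exp (-L)) * L ^ (2*κ)
            = A * (L * L ^ (2*κ) * Real.exp (-1 * L)) := by rw [neg_one_mul]; ring
          _ ≤ A * A⁻¹ := h3
          _ = 1 := mul_inv_cancel₀ hApos.ne'
      rw [Real.rpow_neg hLpos.le, inv_eq_one_div, le_div_iff₀ hLκ]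
      exact h2
    have hterm2 : σ ^ 2 * ∑ j ∈ Finset.range D₀, Real.exp (2 * p * ((j : ℝ) + 1))
        ≤ L ^ (-(2*κ)) := by
      have hs1 : ∑ j ∈ Finset.range D₀, Real.exp (2 * p * ((j : ℝ) + 1))
          ≤ (D₀ : ℝ) * Real.exp (2*p*(D₀:ℝ)) := by
        calc ∑ j ∈ Finset.range D₀, Real.exp (2 * p * ((j : ℝ) + 1))
            ≤ ∑ _j ∈ Finset.range D₀, Real.exp (2*p*(D₀:ℝ)) := by
              refine Finset.sum_le_sum fun j hj => Real.exp_le_exp.mpr ?_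
              have : (j:ℝ) + 1 ≤ (D₀:ℝ) := by
                have := Finset.mem_range.mp hj
                exact_mod_cast Nat.succ_le_of_lt this
              nlinarith
          _ = (D₀ : ℝ) * Real.exp (2*p*(D₀:ℝ)) := by
              rw [Finset.sum_const, Finset.card_range, nsmul_eq_mul]
      have he1 : Real.exp (2*p*(D₀:ℝ)) ≤ Real.exp L * Real.exp (2*p) := by
        rw [← Real.exp_add]
        apply Real.exp_le_exp.mpr
        have : 2*p*(D₀:ℝ) < 2*p*(L/(2*p)+1) := by
          apply mul_lt_mul_of_pos_left hD₀' (by positivity)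
        calc 2*p*(D₀:ℝ) ≤ 2*p*(L/(2*p)+1) := this.le
          _ = L + 2*p := by field_simp
      have hD₀le : (D₀:ℝ) ≤ (1/(2*p) + 1) * L := by
        have : L/(2*p) + 1 ≤ L/(2*p) + L := by linarith
        calc (D₀:ℝ) ≤ L/(2*p) + 1 := hD₀'.le
          _ ≤ L/(2*p) + L := this
          _ = (1/(2*p) + 1) * L := by ring
      have hσ2 : σ^2 = Real.exp (-L) * Real.exp (-L) := by rw [hσeq]; ring
      calc σ ^ 2 * ∑ j ∈ Finset.range D₀, Real.exp (2 * p * ((j : ℝ) + 1))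
          ≤ σ ^ 2 * ((D₀ : ℝ) * Real.exp (2*p*(D₀:ℝ))) :=
            mul_le_mul_of_nonneg_left hs1 (by positivity)
        _ ≤ σ ^ 2 * (((1/(2*p) + 1) * L) * (Real.exp L * Real.exp (2*p))) := by
            apply mul_le_mul_of_nonneg_left _ (by positivity)
            apply mul_le_mul hD₀le he1 (Real.exp_pos _).le (by positivity)
        _ = A * (L * Real.exp (-L)) := by
            have hee : Real.exp (-L) * Real.exp L = 1 := by
              rw [← Real.exp_add]; simp
            rw [hσ2, hA]
            linear_combination (Real.exp (2*p) * (1/(2*p)+1) * L * Real.exp (-L)) * hee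
        _ ≤ L ^ (-(2*κ)) := hkey
    calc Q ^ 2 / ((D₀ : ℝ) + 1) ^ (2 * κ)
        + σ ^ 2 * ∑ j ∈ Finset.range D₀, Real.exp (2 * p * ((j : ℝ) + 1))
        ≤ Q^2 * (2*p) ^ (2*κ) * L ^ (-(2*κ)) + L ^ (-(2*κ)) := add_le_add hterm1 hterm2
      _ = (Q ^ 2 * (2 * p) ^ (2 * κ) + 1) * L ^ (-(2 * κ)) := by ring
end

section
/- Let p > 0, κ > 0 and Q > 0, and set a_j = e^{κj} and s_j = j^{−p} for j ≥ 1. Then there exist constants 0 < c ≤ C and σ₀ > 0 such that for all σ ∈ (0, σ₀): c · σ² (log(1/σ))^{2p+1} ≤ inf_{D ≥ 0} ( Q² e^{−2κ(D+1)} + σ² ∑_{j=1}^D j^{2p} ) ≤ C · σ² (log(1/σ))^{2p+1}. -/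
/- Indexing convention: with `D : ℕ` playing the role of the truncation level
`D ≥ 0`, the term `Q² e^{−2κ(D+1)}` is `Q ^ 2 * Real.exp (-(2 * κ) * ((D : ℝ) + 1))`
and `∑_{j=1}^D j^{2p}` is `∑ j ∈ Finset.range D, ((j : ℝ) + 1) ^ (2 * p)`
(real powers are `Real.rpow`). -/

set_option maxHeartbeats 1000000 in
/-- for analytic smoothness `a_j = e^{κj}` and a moderately ill-posed
operator `s_j = j^{−p}`, the best truncated-series squared risk behaves like
`σ² (log(1/σ))^{2p+1}` as `σ → 0`, up to constants. -/
theorem rate_analytic_moderate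
    (p κ Q : ℝ) (hp : 0 < p) (hκ : 0 < κ) (hQ : 0 < Q) :
    ∃ c C σ₀ : ℝ, 0 < c ∧ c ≤ C ∧ 0 < σ₀ ∧
      ∀ σ : ℝ, 0 < σ → σ < σ₀ →
        c * (σ ^ 2 * (Real.log (1 / σ)) ^ (2 * p + 1))
          ≤ (⨅ D : ℕ, (Q ^ 2 * Real.exp (-(2 * κ) * ((D : ℝ) + 1))
              + σ ^ 2 * ∑ j ∈ Finset.range D, ((j : ℝ) + 1) ^ (2 * p))) ∧
        (⨅ D : ℕ, (Q ^ 2 * Real.exp (-(2 * κ) * ((D : ℝ) + 1))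
              + σ ^ 2 * ∑ j ∈ Finset.range D, ((j : ℝ) + 1) ^ (2 * p)))
          ≤ C * (σ ^ 2 * (Real.log (1 / σ)) ^ (2 * p + 1)) := by
  have hp' : (0:ℝ) ≤ 2 * p := by positivity
  have hp1 : (0:ℝ) < 2 * p + 1 := by positivity
  set C : ℝ := Q ^ 2 + (1/κ + 1) ^ (2*p+1) with hC
  set c₁ : ℝ := (1/(8*κ)) ^ (2*p+1) with hc₁
  have hc₁pos : 0 < c₁ := Real.rpow_pos_of_pos (by positivity) _
  have hCpos : 0 < C := by
    have : (0:ℝ) < (1/κ + 1) ^ (2*p+1) := Real.rpow_pos_of_pos (by positivity) _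
    positivity
  -- eventual smallness of x^(2p+1) * exp(-x)
  have htend := tendsto_rpow_mul_exp_neg_mul_atTop_nhds_zero (2*p+1) 1 one_pos
  have hev : ∀ᶠ x in Filter.atTop, x ^ (2*p+1) * Real.exp (-1 * x) < Q^2 / c₁ :=
    htend.eventually_lt_const (by positivity)
  obtain ⟨t₀, ht₀⟩ := hev.exists_forall_of_atTop
  refine ⟨min c₁ C, C, Real.exp (-(max t₀ (max 1 (4*κ)))), lt_min hc₁pos hCpos,
    min_le_right _ _, Real.exp_pos _, ?_⟩
  intro σ hσ hσ₀
  set L : ℝ := Real.log (1/σ) with hLdef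
  have hLlog : L = -Real.log σ := by rw [hLdef, one_div, Real.log_inv]
  have hlogσ : Real.log σ < -(max t₀ (max 1 (4*κ))) := by
    have := Real.log_lt_log hσ hσ₀
    rwa [Real.log_exp] at this
  have hLgt : max t₀ (max 1 (4*κ)) < L := by rw [hLlog]; linarith
  have hL1 : 1 ≤ L := le_trans (le_trans (le_max_left 1 (4*κ)) (le_max_right _ _)) hLgt.le
  have hL4κ : 4*κ ≤ L := le_trans (le_trans (le_max_right 1 (4*κ)) (le_max_right _ _)) hLgt.le
  have hLt₀ : t₀ ≤ L := le_trans (le_max_left _ _) hLgt.le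
  have hLpos : 0 < L := lt_of_lt_of_le one_pos hL1
  have hσL : Real.exp (-L) = σ := by rw [hLlog, neg_neg, Real.exp_log hσ]
  have hLpow1 : (1:ℝ) ≤ L ^ (2*p+1) := Real.one_le_rpow hL1 hp1.le
  have hLpownn : (0:ℝ) ≤ L ^ (2*p+1) := le_trans zero_le_one hLpow1
  set f : ℕ → ℝ := fun D => Q ^ 2 * Real.exp (-(2 * κ) * ((D : ℝ) + 1))
      + σ ^ 2 * ∑ j ∈ Finset.range D, ((j : ℝ) + 1) ^ (2 * p) with hf
  have hfnn : ∀ D, 0 ≤ f D := by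
    intro D
    have hsum : (0:ℝ) ≤ ∑ j ∈ Finset.range D, ((j : ℝ) + 1) ^ (2 * p) :=
      Finset.sum_nonneg fun j _ => Real.rpow_nonneg (by positivity) _
    positivity
  have hbdd : BddBelow (Set.range f) := ⟨0, by rintro _ ⟨D, rfl⟩; exact hfnn D⟩
  clear_value C c₁ L f
  constructor
  · -- lower bound
    refine le_ciInf fun D => ?_
    by_cases hD : (D:ℝ) + 1 ≤ L / (2*κ)
    · -- small D : bias term dominates
      have hDκ : (2*κ) * ((D:ℝ)+1) ≤ L := by
        have h := (le_div_iff₀ (by positivity : (0:ℝ) < 2*κ)).1 hD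
        linarith
      have hexp : Real.exp (-L) ≤ Real.exp (-(2*κ) * ((D:ℝ)+1)) :=
        Real.exp_le_exp.2 (by linarith)
      have key : c₁ * (σ * L ^ (2*p+1)) < Q ^ 2 := by
        have h1 := ht₀ L hLt₀
        rw [neg_one_mul, hσL, lt_div_iff₀ hc₁pos] at h1
        linarith
      have h2 : min c₁ C * (σ ^ 2 * L ^ (2*p+1)) ≤ Q ^ 2 * σ := by
        have hmin : min c₁ C ≤ c₁ := min_le_left _ _
        have hnn : (0:ℝ) ≤ σ ^ 2 * L ^ (2*p+1) := mul_nonneg (sq_nonneg σ) hLpownn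
        have step1 : min c₁ C * (σ ^ 2 * L ^ (2*p+1)) ≤ c₁ * (σ ^ 2 * L ^ (2*p+1)) :=
          mul_le_mul_of_nonneg_right hmin hnn
        have step2 := mul_le_mul_of_nonneg_right key.le hσ.le
        nlinarith
      have hsum : (0:ℝ) ≤ σ ^ 2 * ∑ j ∈ Finset.range D, ((j : ℝ) + 1) ^ (2 * p) := by
        have : (0:ℝ) ≤ ∑ j ∈ Finset.range D, ((j : ℝ) + 1) ^ (2 * p) :=
          Finset.sum_nonneg fun j _ => Real.rpow_nonneg (by positivity) _
        positivity
      have hbias : Q ^ 2 * σ ≤ Q ^ 2 * Real.exp (-(2*κ) * ((D:ℝ)+1)) := by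
        have := mul_le_mul_of_nonneg_left hexp (by positivity : (0:ℝ) ≤ Q ^ 2)
        rwa [hσL] at this
      simp only [hf]
      linarith
    · -- large D : variance term dominates
      push_neg at hD
      have hDge : L / (4*κ) ≤ (D:ℝ) := by
        have h1 : L/(2*κ) - 1 < (D:ℝ) := by linarith
        have h2 : (1:ℝ) ≤ L/(4*κ) := by rw [le_div_iff₀ (by positivity)]; linarith
        have h3 : L/(2*κ) = L/(4*κ) + L/(4*κ) := by field_simp; ring
        linarith
      have hDpos : (0:ℝ) < (D:ℝ) := lt_of_lt_of_le (by positivity) hDge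
      have hD1 : 1 ≤ D := by exact_mod_cast Nat.one_le_iff_ne_zero.2 (by
        intro h; rw [h] at hDpos; simp at hDpos)
      -- sum lower bound
      have hsub : Finset.Ico (D/2) D ⊆ Finset.range D := by
        intro j hj
        rw [Finset.mem_Ico] at hj
        exact Finset.mem_range.2 hj.2
      have hterm : ∀ j ∈ Finset.Ico (D/2) D,
          ((D:ℝ)/2) ^ (2*p) ≤ ((j:ℝ) + 1) ^ (2*p) := by
        intro j hj
        rw [Finset.mem_Ico] at hj
        apply Real.rpow_le_rpow (by positivity) _ hp'
        have : (D/2 : ℕ) ≤ j := hj.1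
        have h2 : ((D/2 : ℕ) : ℝ) ≤ (j:ℝ) := by exact_mod_cast this
        have h3 : (D:ℝ) ≤ 2 * ((D/2 : ℕ) : ℝ) + 1 := by
          have : D ≤ 2 * (D/2) + 1 := by omega
          exact_mod_cast this
        linarith
      have hcard : (D:ℝ)/2 ≤ ((Finset.Ico (D/2) D).card : ℝ) := by
        rw [Nat.card_Ico]
        have : D ≤ 2 * (D - D/2) := by omega
        have h2 : (D:ℝ) ≤ 2 * ((D - D/2 : ℕ) : ℝ) := by exact_mod_cast this
        linarith
      have hS : ((D:ℝ)/2) ^ (2*p+1)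
          ≤ ∑ j ∈ Finset.range D, ((j : ℝ) + 1) ^ (2 * p) := by
        have h1 : ((Finset.Ico (D/2) D).card : ℝ) * ((D:ℝ)/2) ^ (2*p)
            ≤ ∑ j ∈ Finset.Ico (D/2) D, ((j : ℝ) + 1) ^ (2*p) := by
          have := Finset.card_nsmul_le_sum (Finset.Ico (D/2) D)
            (fun j => ((j:ℝ) + 1) ^ (2*p)) (((D:ℝ)/2) ^ (2*p)) hterm
          simpa [nsmul_eq_mul] using this
        have h2 : ∑ j ∈ Finset.Ico (D/2) D, ((j : ℝ) + 1) ^ (2*p)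
            ≤ ∑ j ∈ Finset.range D, ((j : ℝ) + 1) ^ (2 * p) :=
          Finset.sum_le_sum_of_subset_of_nonneg hsub
            (fun j _ _ => Real.rpow_nonneg (by positivity) _)
        have h3 : ((D:ℝ)/2) ^ (2*p+1) = ((D:ℝ)/2) ^ (2*p) * ((D:ℝ)/2) := by
          rw [Real.rpow_add_one (by positivity : ((D:ℝ)/2) ≠ 0)]
        have h4 : (0:ℝ) ≤ ((D:ℝ)/2) ^ (2*p) := Real.rpow_nonneg (by positivity) _
        nlinarith
      have hS2 : (L/(8*κ)) ^ (2*p+1) ≤ ((D:ℝ)/2) ^ (2*p+1) := by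
        apply Real.rpow_le_rpow (by positivity) _ hp1.le
        have : L/(8*κ) = (L/(4*κ))/2 := by ring
        rw [this]
        linarith
      have hS3 : (L/(8*κ)) ^ (2*p+1) = c₁ * L ^ (2*p+1) := by
        rw [hc₁, ← Real.mul_rpow (by positivity) hLpos.le]
        ring_nf
      have hfin : min c₁ C * (σ ^ 2 * L ^ (2*p+1))
          ≤ σ ^ 2 * ∑ j ∈ Finset.range D, ((j : ℝ) + 1) ^ (2 * p) := by
        have hmin : min c₁ C ≤ c₁ := min_le_left _ _
        have hσ2 : (0:ℝ) ≤ σ ^ 2 := by positivity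
        have hchain : c₁ * L ^ (2*p+1) ≤ ∑ j ∈ Finset.range D, ((j : ℝ) + 1) ^ (2 * p) := by
          rw [← hS3]; linarith
        calc min c₁ C * (σ ^ 2 * L ^ (2*p+1)) = σ ^ 2 * (min c₁ C * L ^ (2*p+1)) := by ring
          _ ≤ σ ^ 2 * (c₁ * L ^ (2*p+1)) := by
              apply mul_le_mul_of_nonneg_left _ hσ2
              exact mul_le_mul_of_nonneg_right hmin hLpownn
          _ ≤ σ ^ 2 * ∑ j ∈ Finset.range D, ((j : ℝ) + 1) ^ (2 * p) :=
              mul_le_mul_of_nonneg_left hchain hσ2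
      have hbias : (0:ℝ) ≤ Q ^ 2 * Real.exp (-(2 * κ) * ((D : ℝ) + 1)) := by positivity
      simp only [hf]
      linarith
  · -- upper bound
    obtain ⟨D₀, hle, hD₀lt⟩ : ∃ D₀ : ℕ, L/κ ≤ (D₀:ℝ) ∧ (D₀:ℝ) < L/κ + 1 :=
      ⟨⌈L/κ⌉₊, Nat.le_ceil _, Nat.ceil_lt_add_one (by positivity)⟩
    have hee : (1/κ + 1) * L = L/κ + L := by ring
    have hD₀ub : (D₀:ℝ) + 1 ≤ (1/κ + 1) * L + 1 := by linarith
    have step : f D₀ ≤ C * (σ ^ 2 * L ^ (2*p+1)) := by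
      have hexp : Real.exp (-(2*κ) * ((D₀:ℝ)+1)) ≤ σ ^ 2 := by
        have h1 : L ≤ κ * ((D₀:ℝ)+1) := by
          rw [div_le_iff₀ hκ] at hle
          linarith
        have h2 : Real.exp (-(2*κ) * ((D₀:ℝ)+1)) ≤ Real.exp (-(2*L)) := by
          apply Real.exp_le_exp.2; linarith
        have h3 : Real.exp (-(2*L)) = σ ^ 2 := by
          rw [show -(2*L) = (-L) + (-L) by ring, Real.exp_add, hσL]; ring
        linarith
      have hsum : ∑ j ∈ Finset.range D₀, ((j : ℝ) + 1) ^ (2 * p)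
          ≤ (1/κ + 1) ^ (2*p+1) * L ^ (2*p+1) := by
        have hterm : ∀ j ∈ Finset.range D₀, ((j:ℝ)+1) ^ (2*p) ≤ ((D₀:ℝ)) ^ (2*p) := by
          intro j hj
          rw [Finset.mem_range] at hj
          apply Real.rpow_le_rpow (by positivity) _ hp'
          have : (j:ℝ) + 1 ≤ (D₀:ℝ) := by exact_mod_cast Nat.succ_le_of_lt hj
          linarith
        have h1 : ∑ j ∈ Finset.range D₀, ((j : ℝ) + 1) ^ (2 * p)
            ≤ (D₀:ℝ) * ((D₀:ℝ)) ^ (2*p) := by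
          have := Finset.sum_le_card_nsmul (Finset.range D₀)
            (fun j => ((j:ℝ)+1) ^ (2*p)) (((D₀:ℝ)) ^ (2*p)) hterm
          simpa [nsmul_eq_mul] using this
        have h0 : (0:ℝ) < (D₀:ℝ) := lt_of_lt_of_le (div_pos hLpos hκ) hle
        have h2 : (D₀:ℝ) * ((D₀:ℝ)) ^ (2*p) = (D₀:ℝ) ^ (2*p+1) := by
          rw [Real.rpow_add_one (ne_of_gt h0)]; ring
        have h3 : (D₀:ℝ) ^ (2*p+1) ≤ ((1/κ + 1) * L) ^ (2*p+1) := by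
          apply Real.rpow_le_rpow h0.le _ hp1.le
          linarith
        have h4 : ((1/κ + 1) * L) ^ (2*p+1) = (1/κ + 1) ^ (2*p+1) * L ^ (2*p+1) :=
          Real.mul_rpow (by positivity) hLpos.le
        linarith
      have hQσ : Q ^ 2 * Real.exp (-(2*κ) * ((D₀:ℝ)+1)) ≤ Q ^ 2 * σ ^ 2 :=
        mul_le_mul_of_nonneg_left hexp (by positivity)
      have hσ2 : (0:ℝ) ≤ σ ^ 2 := by positivity
      have h5 : σ ^ 2 * ∑ j ∈ Finset.range D₀, ((j : ℝ) + 1) ^ (2 * p)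
          ≤ σ ^ 2 * ((1/κ + 1) ^ (2*p+1) * L ^ (2*p+1)) :=
        mul_le_mul_of_nonneg_left hsum hσ2
      have h6 : Q ^ 2 * σ ^ 2 ≤ Q ^ 2 * (σ ^ 2 * L ^ (2*p+1)) := by
        have := mul_le_mul_of_nonneg_left hLpow1
          (mul_nonneg (sq_nonneg Q) (sq_nonneg σ))
        linarith [this]
      have h7 : σ ^ 2 * ((1/κ + 1) ^ (2*p+1) * L ^ (2*p+1))
          = (1/κ + 1) ^ (2*p+1) * (σ ^ 2 * L ^ (2*p+1)) := by ring
      have hgoal : C * (σ ^ 2 * L ^ (2*p+1))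
          = Q ^ 2 * (σ ^ 2 * L ^ (2*p+1))
            + (1/κ + 1) ^ (2*p+1) * (σ ^ 2 * L ^ (2*p+1)) := by rw [hC]; ring
      simp only [hf]
      linarith
    exact le_trans (ciInf_le hbdd D₀) step
end

section
/- Let p > 0, κ > 0 and Q > 0, and set a_j = e^{κj} and s_j = e^{−pj} for j ≥ 1. Then there exist constants 0 < c ≤ C and σ₀ > 0 such that for all σ ∈ (0, σ₀): c · σ^{2κ/(p + κ)} ≤ inf_{D ≥ 0} ( Q² e^{−2κ(D+1)} + σ² ∑_{j=1}^D e^{2pj} ) ≤ C · σ^{2κ/(p + κ)}. -/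
/- Indexing convention: with `D : ℕ` playing the role of the truncation level
`D ≥ 0`, the term `Q² e^{−2κ(D+1)}` is `Q ^ 2 * Real.exp (-(2 * κ) * ((D : ℝ) + 1))`
and `∑_{j=1}^D e^{2pj}` is `∑ j ∈ Finset.range D, Real.exp (2 * p * ((j : ℝ) + 1))`
(real powers are `Real.rpow`). -/

/-- for analytic smoothness `a_j = e^{κj}` and a severely ill-posed
operator `s_j = e^{−pj}`, the best truncated-series squared risk behaves like
`σ^{2κ/(p+κ)}` as `σ → 0`, up to constants. -/
theorem rate_analytic_severe
    (p κ Q : ℝ) (hp : 0 < p) (hκ : 0 < κ) (hQ : 0 < Q) :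
    ∃ c C σ₀ : ℝ, 0 < c ∧ c ≤ C ∧ 0 < σ₀ ∧
      ∀ σ : ℝ, 0 < σ → σ < σ₀ →
        c * σ ^ (2 * κ / (p + κ))
          ≤ (⨅ D : ℕ, (Q ^ 2 * Real.exp (-(2 * κ) * ((D : ℝ) + 1))
              + σ ^ 2 * ∑ j ∈ Finset.range D, Real.exp (2 * p * ((j : ℝ) + 1)))) ∧
        (⨅ D : ℕ, (Q ^ 2 * Real.exp (-(2 * κ) * ((D : ℝ) + 1))
              + σ ^ 2 * ∑ j ∈ Finset.range D, Real.exp (2 * p * ((j : ℝ) + 1))))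
          ≤ C * σ ^ (2 * κ / (p + κ)) := by
  have hpκ : 0 < p + κ := by linarith
  have hx1 : (1:ℝ) < Real.exp (2 * p) := by
    have := Real.add_one_le_exp (2 * p); linarith
  have hexpneg : Real.exp (-(2 * κ)) ≤ 1 := Real.exp_le_one_iff.mpr (by linarith)
  refine ⟨min 1 (Q ^ 2 * Real.exp (-(2 * κ))),
    Q ^ 2 + Real.exp (4 * p) / (Real.exp (2 * p) - 1), 1,
    lt_min one_pos (by positivity), ?_, one_pos, ?_⟩
  · have h1 : min 1 (Q ^ 2 * Real.exp (-(2 * κ))) ≤ Q ^ 2 * Real.exp (-(2 * κ)) :=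
      min_le_right _ _
    have h2 : Q ^ 2 * Real.exp (-(2 * κ)) ≤ Q ^ 2 := by nlinarith [sq_nonneg Q]
    have h3 : 0 ≤ Real.exp (4 * p) / (Real.exp (2 * p) - 1) := div_nonneg (Real.exp_pos _).le (by linarith)
    linarith
  intro σ hσ hσ1
  have hlog : Real.log σ < 0 := Real.log_neg hσ hσ1
  set t : ℝ := -Real.log σ / (p + κ) with ht
  have ht0 : 0 < t := div_pos (by linarith) hpκ
  set r : ℝ := 2 * κ / (p + κ) with hr
  have hkey : σ ^ r = Real.exp (-(2 * κ) * t) := by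
    rw [Real.rpow_def_of_pos hσ]
    congr 1
    field_simp [ht, hr]
    ring
  have hsq : σ ^ 2 = Real.exp (Real.log σ * 2) := by
    rw [← Real.rpow_natCast σ 2, Real.rpow_def_of_pos hσ]
    norm_num
  have hkey2 : σ ^ 2 * Real.exp (2 * p * t) = σ ^ r := by
    rw [hsq, ← Real.exp_add, Real.rpow_def_of_pos hσ]
    congr 1
    rw [ht, hr]; field_simp
    ring
  have hrpos : 0 ≤ σ ^ r := Real.rpow_nonneg hσ.le r
  constructor
  · -- lower bound
    apply le_ciInf
    intro D
    have hsum_nonneg : 0 ≤ ∑ j ∈ Finset.range D, Real.exp (2 * p * ((j : ℝ) + 1)) :=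
      Finset.sum_nonneg fun _ _ => (Real.exp_pos _).le
    by_cases hD : (D : ℝ) ≤ t
    · have hmono : Real.exp (-(2 * κ)) * Real.exp (-(2 * κ) * t)
          ≤ Real.exp (-(2 * κ) * ((D : ℝ) + 1)) := by
        rw [← Real.exp_add]
        apply Real.exp_le_exp.mpr
        nlinarith
      have : min 1 (Q ^ 2 * Real.exp (-(2 * κ))) * σ ^ r
          ≤ Q ^ 2 * Real.exp (-(2 * κ) * ((D : ℝ) + 1)) := by
        calc min 1 (Q ^ 2 * Real.exp (-(2 * κ))) * σ ^ r
            ≤ Q ^ 2 * Real.exp (-(2 * κ)) * σ ^ r :=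
              mul_le_mul_of_nonneg_right (min_le_right _ _) hrpos
          _ = Q ^ 2 * (Real.exp (-(2 * κ)) * Real.exp (-(2 * κ) * t)) := by
              rw [hkey]; ring
          _ ≤ Q ^ 2 * Real.exp (-(2 * κ) * ((D : ℝ) + 1)) := by
              apply mul_le_mul_of_nonneg_left hmono (by positivity)
      have h2 : 0 ≤ σ ^ 2 * ∑ j ∈ Finset.range D, Real.exp (2 * p * ((j : ℝ) + 1)) := by
        positivity
      linarith
    · push_neg at hD
      have hDpos : 0 < D := by exact_mod_cast ht0.trans hD
      have hmem : D - 1 ∈ Finset.range D := Finset.mem_range.mpr (by omega)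
      have hcast : ((D - 1 : ℕ) : ℝ) + 1 = (D : ℝ) := by
        have : (1:ℕ) ≤ D := hDpos
        push_cast [Nat.cast_sub this]
        ring
      have hterm : Real.exp (2 * p * t) ≤ Real.exp (2 * p * (((D - 1 : ℕ) : ℝ) + 1)) := by
        apply Real.exp_le_exp.mpr
        rw [hcast]
        nlinarith
      have hsum : Real.exp (2 * p * t)
          ≤ ∑ j ∈ Finset.range D, Real.exp (2 * p * ((j : ℝ) + 1)) :=
        hterm.trans (Finset.single_le_sum (f := fun j : ℕ => Real.exp (2 * p * ((j : ℝ) + 1)))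
          (fun i _ => (Real.exp_pos _).le) hmem)
      have h1 : min 1 (Q ^ 2 * Real.exp (-(2 * κ))) * σ ^ r ≤ σ ^ r := by
        nlinarith [min_le_left 1 (Q ^ 2 * Real.exp (-(2 * κ)))]
      have h2 : σ ^ r ≤ σ ^ 2 * ∑ j ∈ Finset.range D, Real.exp (2 * p * ((j : ℝ) + 1)) := by
        rw [← hkey2]
        apply mul_le_mul_of_nonneg_left hsum (by positivity)
      have h3 : 0 ≤ Q ^ 2 * Real.exp (-(2 * κ) * ((D : ℝ) + 1)) := by positivity
      linarith
  · -- upper bound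
    have hbdd : BddBelow (Set.range fun D : ℕ =>
        Q ^ 2 * Real.exp (-(2 * κ) * ((D : ℝ) + 1))
          + σ ^ 2 * ∑ j ∈ Finset.range D, Real.exp (2 * p * ((j : ℝ) + 1))) := by
      refine ⟨0, ?_⟩
      rintro _ ⟨D, rfl⟩
      have : 0 ≤ ∑ j ∈ Finset.range D, Real.exp (2 * p * ((j : ℝ) + 1)) :=
        Finset.sum_nonneg fun _ _ => (Real.exp_pos _).le
      positivity
    set D : ℕ := ⌈t⌉₊ with hDdef
    refine (ciInf_le hbdd D).trans ?_
    have hDt : t ≤ (D : ℝ) := Nat.le_ceil t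
    have hDt2 : (D : ℝ) ≤ t + 1 := by
      have := Nat.ceil_lt_add_one ht0.le
      linarith
    have hterm1 : Q ^ 2 * Real.exp (-(2 * κ) * ((D : ℝ) + 1)) ≤ Q ^ 2 * σ ^ r := by
      rw [hkey]
      apply mul_le_mul_of_nonneg_left ?_ (by positivity)
      apply Real.exp_le_exp.mpr
      nlinarith
    set x : ℝ := Real.exp (2 * p) with hxdef
    have hxpos : (0:ℝ) < x := Real.exp_pos _
    have hsum_eq : ∑ j ∈ Finset.range D, Real.exp (2 * p * ((j : ℝ) + 1))
        = ∑ j ∈ Finset.range D, x ^ (j + 1) := by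
      refine Finset.sum_congr rfl fun j _ => ?_
      rw [hxdef, ← Real.exp_nat_mul]
      congr 1
      push_cast
      ring
    have hgeom : ∑ j ∈ Finset.range D, x ^ (j + 1) = x * ((x ^ D - 1) / (x - 1)) := by
      rw [← geom_sum_eq (ne_of_gt hx1), Finset.mul_sum]
      exact Finset.sum_congr rfl fun j _ => by ring
    have hx1' : (0:ℝ) < x - 1 := by linarith
    have hsum_le : ∑ j ∈ Finset.range D, x ^ (j + 1) ≤ x ^ (D + 1) / (x - 1) := by
      rw [hgeom, mul_div_assoc']
      apply div_le_div_of_nonneg_right ?_ hx1'.le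
      have hps : x ^ (D + 1) = x ^ D * x := pow_succ x D
      nlinarith [pow_pos hxpos D]
    have hpow : x ^ (D + 1) ≤ Real.exp (4 * p) * Real.exp (2 * p * t) := by
      rw [hxdef, ← Real.exp_nat_mul, ← Real.exp_add]
      apply Real.exp_le_exp.mpr
      push_cast
      nlinarith
    have hterm2 : σ ^ 2 * ∑ j ∈ Finset.range D, Real.exp (2 * p * ((j : ℝ) + 1))
        ≤ Real.exp (4 * p) / (x - 1) * σ ^ r := by
      rw [hsum_eq, ← hkey2]
      calc σ ^ 2 * ∑ j ∈ Finset.range D, x ^ (j + 1)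
          ≤ σ ^ 2 * (x ^ (D + 1) / (x - 1)) :=
            mul_le_mul_of_nonneg_left hsum_le (by positivity)
        _ ≤ σ ^ 2 * (Real.exp (4 * p) * Real.exp (2 * p * t) / (x - 1)) := by
            apply mul_le_mul_of_nonneg_left ?_ (by positivity)
            exact div_le_div_of_nonneg_right hpow hx1'.le
        _ = Real.exp (4 * p) / (x - 1) * (σ ^ 2 * Real.exp (2 * p * t)) := by ring
    calc Q ^ 2 * Real.exp (-(2 * κ) * ((D : ℝ) + 1))
          + σ ^ 2 * ∑ j ∈ Finset.range D, Real.exp (2 * p * ((j : ℝ) + 1))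
        ≤ Q ^ 2 * σ ^ r + Real.exp (4 * p) / (x - 1) * σ ^ r := add_le_add hterm1 hterm2
      _ = (Q ^ 2 + Real.exp (4 * p) / (Real.exp (2 * p) - 1)) * σ ^ r := by
          rw [hxdef]; ring
end
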